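/- arXiv:0712.1936 — 4 statements merged into one kernel-verified Lean document; each statement's English description precedes it below -/
import Mathlib

section
/- Suppose Σ_{l∈ℤ} |a_l|² = Σ_{l∈ℤ} |(1/J) Σ_{j=1}^J a_l e^{i l α_j}|² and that the set {l ∈ ℤ : a_l ≠ 0} contains two coprime integers. Then the coordinates of α are all congruent modulo 2π to a common constant: for every j ∈ {1,…,J} there exists k_j ∈ ℤ with α_j = α_1 + 2π k_j. -/
open Complex

lemma keyA {J : ℕ} (x : Fin J → ℝ)
    (h : ‖∑ j : Fin J, Complex.exp (Complex.I * (x j : ℂ))‖ = J) :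
    ∀ j k : Fin J, ∃ n : ℤ, x j - x k = 2 * Real.pi * n := by
  set S := ∑ j : Fin J, Complex.exp (Complex.I * (x j : ℂ)) with hS
  have hprod : S * (starRingEnd ℂ) S =
      ∑ j : Fin J, ∑ k : Fin J, Complex.exp (((x j - x k : ℝ) : ℂ) * Complex.I) := by
    rw [hS, map_sum, Finset.sum_mul_sum]
    refine Finset.sum_congr rfl fun j _ => Finset.sum_congr rfl fun k _ => ?_
    rw [← Complex.exp_conj, ← Complex.exp_add]
    congr 1
    simp [Complex.conj_I, Complex.conj_ofReal]
    push_cast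
    ring
  have hcos : ∑ j : Fin J, ∑ k : Fin J, Real.cos (x j - x k) = (J : ℝ) ^ 2 := by
    have h1 : (S * (starRingEnd ℂ) S).re = (J : ℝ) ^ 2 := by
      rw [Complex.mul_conj, Complex.ofReal_re, Complex.normSq_eq_norm_sq, h]
    rw [← h1, hprod, Complex.re_sum]
    refine Finset.sum_congr rfl fun j _ => ?_
    rw [Complex.re_sum]
    exact Finset.sum_congr rfl fun k _ => (Complex.exp_ofReal_mul_I_re _).symm
  have hcos1 : ∀ j k : Fin J, Real.cos (x j - x k) = 1 := by
    have hle : ∀ p ∈ (Finset.univ : Finset (Fin J × Fin J)),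
        Real.cos (x p.1 - x p.2) ≤ 1 := fun p _ => Real.cos_le_one _
    have hsum : ∑ p : Fin J × Fin J, Real.cos (x p.1 - x p.2) =
        ∑ _p : Fin J × Fin J, (1 : ℝ) := by
      rw [Fintype.sum_prod_type]
      rw [hcos]
      simp [Finset.card_univ]
      ring
    have := (Finset.sum_eq_sum_iff_of_le hle).1 hsum
    intro j k
    exact this (j, k) (Finset.mem_univ _)
  intro j k
  obtain ⟨n, hn⟩ := (Real.cos_eq_one_iff _).1 (hcos1 j k)
  exact ⟨n, by linarith⟩

/-- If `Σ |a_l|² = Σ |(1/J) Σ_j a_l e^{i l α_j}|²` and the support of `a`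
contains two coprime integers, then all the `α_j` are congruent modulo `2π` to `α_1`. -/
theorem stmt6 (J : ℕ) (hJ : 0 < J) (a : ℤ → ℂ)
    (ha : Summable fun l : ℤ => ‖a l‖ ^ 2) (α : Fin J → ℝ)
    (heq : ∑' l : ℤ, ‖a l‖ ^ 2 =
      ∑' l : ℤ, ‖(1 / (J : ℂ)) * ∑ j : Fin J, a l * Complex.exp (Complex.I * (l : ℂ) * (α j : ℂ))‖ ^ 2)
    (hcop : ∃ p q : ℤ, p ≠ q ∧ a p ≠ 0 ∧ a q ≠ 0 ∧ IsCoprime p q) :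
    ∀ j : Fin J, ∃ k : ℤ, α j = α ⟨0, hJ⟩ + 2 * Real.pi * (k : ℝ) := by
  obtain ⟨p, q, hpq, hap, haq, hcp⟩ := hcop
  set g : ℤ → ℝ := fun l =>
    ‖(1 / (J : ℂ)) * ∑ j : Fin J, a l * Complex.exp (Complex.I * (l : ℂ) * (α j : ℂ))‖ ^ 2 with hg
  have hJR : (0 : ℝ) < J := by exact_mod_cast hJ
  -- termwise bound
  have hle : ∀ l, g l ≤ ‖a l‖ ^ 2 := by
    intro l
    have h1 : ‖(1 / (J : ℂ)) * ∑ j : Fin J, a l * Complex.exp (Complex.I * (l : ℂ) * (α j : ℂ))‖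
        ≤ ‖a l‖ := by
      rw [norm_mul]
      have h2 : ‖∑ j : Fin J, a l * Complex.exp (Complex.I * (l : ℂ) * (α j : ℂ))‖
          ≤ (J : ℝ) * ‖a l‖ := by
        calc ‖∑ j : Fin J, a l * Complex.exp (Complex.I * (l : ℂ) * (α j : ℂ))‖
            ≤ ∑ j : Fin J, ‖a l * Complex.exp (Complex.I * (l : ℂ) * (α j : ℂ))‖ :=
              norm_sum_le _ _
          _ = ∑ j : Fin J, ‖a l‖ := by
              refine Finset.sum_congr rfl fun j _ => ?_
              rw [norm_mul]
              have : ‖Complex.exp (Complex.I * (l : ℂ) * (α j : ℂ))‖ = 1 := by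
                rw [Complex.norm_exp]
                simp [Complex.mul_re, Complex.mul_im]
              rw [this, mul_one]
          _ = (J : ℝ) * ‖a l‖ := by simp [Finset.sum_const, Finset.card_univ]
      have hnJ : ‖(1 / (J : ℂ))‖ = 1 / (J : ℝ) := by
        simp [norm_div, Complex.norm_natCast]
      rw [hnJ]
      calc 1 / (J : ℝ) * ‖∑ j : Fin J, a l * Complex.exp (Complex.I * (l : ℂ) * (α j : ℂ))‖
          ≤ 1 / (J : ℝ) * ((J : ℝ) * ‖a l‖) := by
            apply mul_le_mul_of_nonneg_left h2 (by positivity)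
        _ = ‖a l‖ := by field_simp
    calc g l = ‖(1 / (J : ℂ)) * ∑ j : Fin J, a l * Complex.exp (Complex.I * (l : ℂ) * (α j : ℂ))‖ ^ 2 := rfl
      _ ≤ ‖a l‖ ^ 2 := by
          apply pow_le_pow_left₀ (norm_nonneg _) h1
  have hgsum : Summable g := Summable.of_nonneg_of_le (fun l => sq_nonneg _) hle ha
  -- termwise equality
  have heq' : ∀ l, g l = ‖a l‖ ^ 2 := by
    intro l
    by_contra hne
    have hlt : g l < ‖a l‖ ^ 2 := lt_of_le_of_ne (hle l) hne
    have : ∑' l, g l < ∑' l, ‖a l‖ ^ 2 := Summable.tsum_lt_tsum hle hlt hgsum ha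
    rw [← heq] at this
    exact lt_irrefl _ this
  -- from equality at a point with a l ≠ 0, get norm of exp-sum = J
  have key : ∀ l : ℤ, a l ≠ 0 →
      ∀ j k : Fin J, ∃ n : ℤ, (l : ℝ) * α j - (l : ℝ) * α k = 2 * Real.pi * n := by
    intro l hal
    have h1 := heq' l
    rw [hg] at h1
    simp only at h1
    have hfac : ∑ j : Fin J, a l * Complex.exp (Complex.I * (l : ℂ) * (α j : ℂ))
        = a l * ∑ j : Fin J, Complex.exp (Complex.I * (l : ℂ) * (α j : ℂ)) := by
      rw [Finset.mul_sum]
    rw [hfac] at h1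
    have hnorm : (1 / (J : ℝ)) * ‖a l‖ * ‖∑ j : Fin J, Complex.exp (Complex.I * (l : ℂ) * (α j : ℂ))‖ = ‖a l‖ := by
      have h2 : ‖(1 / (J : ℂ)) * (a l * ∑ j : Fin J, Complex.exp (Complex.I * (l : ℂ) * (α j : ℂ)))‖ = ‖a l‖ := by
        have := h1
        nlinarith [norm_nonneg ((1 / (J : ℂ)) * (a l * ∑ j : Fin J, Complex.exp (Complex.I * (l : ℂ) * (α j : ℂ)))), norm_nonneg (a l)]
      rw [norm_mul, norm_mul] at h2
      have hnJ : ‖(1 / (J : ℂ))‖ = 1 / (J : ℝ) := by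
        simp [norm_div, Complex.norm_natCast]
      rw [hnJ] at h2
      linarith [h2]
    have hanz : ‖a l‖ ≠ 0 := by simpa using hal
    have hSn : ‖∑ j : Fin J, Complex.exp (Complex.I * (l : ℂ) * (α j : ℂ))‖ = J := by
      have h3 : ‖a l‖ * ((1 / (J : ℝ)) * ‖∑ j : Fin J, Complex.exp (Complex.I * (l : ℂ) * (α j : ℂ))‖) = ‖a l‖ * 1 := by
        rw [mul_one]; linarith [hnorm]
      have h4 := mul_left_cancel₀ hanz h3
      field_simp at h4
      exact h4
    have hrw : ∀ j : Fin J, Complex.I * (l : ℂ) * (α j : ℂ)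
        = Complex.I * (((l : ℝ) * α j : ℝ) : ℂ) := by
      intro j; push_cast; ring
    have hSn' : ‖∑ j : Fin J, Complex.exp (Complex.I * (((l : ℝ) * α j : ℝ) : ℂ))‖ = J := by
      rw [← hSn]
      congr 1
      exact Finset.sum_congr rfl fun j _ => by rw [hrw j]
    exact keyA (fun j => (l : ℝ) * α j) hSn'
  -- combine using coprimality
  obtain ⟨u, v, huv⟩ := hcp
  intro j
  obtain ⟨m, hm⟩ := key p hap j ⟨0, hJ⟩
  obtain ⟨n, hn⟩ := key q haq j ⟨0, hJ⟩
  refine ⟨u * m + v * n, ?_⟩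
  have huv' : (u : ℝ) * p + v * q = 1 := by exact_mod_cast congrArg (Int.cast : ℤ → ℝ) huv
  have : α j - α ⟨0, hJ⟩ = ((u : ℝ) * p + v * q) * (α j - α ⟨0, hJ⟩) := by rw [huv']; ring
  push_cast
  linear_combination this + (u : ℝ) * hm + (v : ℝ) * hn
end

section
/- The function f⋆μ defined by (f⋆μ)(x) = ∫ f(x − y) dμ(y) is square-integrable on the circle, and (1/T) ∫₀ᵀ |(f⋆μ)(t)|² dt = Σ_{l∈ℤ} |δ_l|² |c_l(f)|², where δ_l = ∫ exp(2πi l ω/T) dμ(ω). -/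
open MeasureTheory AddCircle
open scoped ENNReal ComplexConjugate

private theorem sq_lintegral_le' {α} [MeasurableSpace α] (μ : Measure α) (h : α → ℝ≥0∞)
    (hm : AEMeasurable h μ) :
    (∫⁻ y, h y ∂μ) ^ (2:ℝ) ≤ (∫⁻ y, h y ^ (2:ℝ) ∂μ) * μ Set.univ := by
  have hpq : (2:ℝ).HolderConjugate 2 := ⟨by norm_num, by norm_num, by norm_num⟩
  have H := ENNReal.lintegral_mul_le_Lp_mul_Lq μ hpq hm (aemeasurable_const (b := (1:ℝ≥0∞)))
  simp only [Pi.mul_apply, mul_one, ENNReal.one_rpow, lintegral_one] at H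
  calc (∫⁻ y, h y ∂μ) ^ (2:ℝ)
      ≤ ((∫⁻ y, h y ^ (2:ℝ) ∂μ) ^ (1/(2:ℝ)) * (μ Set.univ) ^ (1/(2:ℝ))) ^ (2:ℝ) :=
        ENNReal.rpow_le_rpow H (by norm_num)
    _ = (∫⁻ y, h y ^ (2:ℝ) ∂μ) * μ Set.univ := by
        rw [ENNReal.mul_rpow_of_nonneg _ _ (by norm_num : (0:ℝ) ≤ 2), ← ENNReal.rpow_mul,
          ← ENNReal.rpow_mul]
        norm_num

private theorem fourier_add_arg {T : ℝ} [Fact (0 < T)] (n : ℤ) (x y : AddCircle T) :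
    fourier n (x + y) = fourier n x * fourier n y := by
  simp_rw [fourier_apply, smul_add, toCircle_add, Circle.coe_mul]

/-- For `f` square-integrable on the circle `ℝ/Tℤ` and `μ` a finite measure
on the circle, `f⋆μ` is square-integrable and
`(1/T)∫₀ᵀ |(f⋆μ)(t)|² dt = Σ_{l∈ℤ} |δ_l|² |c_l(f)|²` with `δ_l = ∫ e^{2πi l ω/T} dμ(ω)`. -/
theorem stmt12 (T : ℝ) [hT : Fact (0 < T)] (f : AddCircle T → ℂ)
    (hf : MemLp f 2 haarAddCircle)
    (μ : Measure (AddCircle T)) [IsFiniteMeasure μ] :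
    MemLp (fun x => ∫ y, f (x - y) ∂μ) 2 haarAddCircle ∧
    ∫ t, ‖∫ y, f (t - y) ∂μ‖ ^ 2 ∂haarAddCircle =
      ∑' l : ℤ, ‖∫ ω, fourier l ω ∂μ‖ ^ 2 * ‖fourierCoeff f l‖ ^ 2 := by
  have hμfin : μ Set.univ ≠ ∞ := measure_ne_top μ _
  set ha : Measure (AddCircle T) := haarAddCircle with hha
  set f' : AddCircle T → ℂ := hf.1.mk f with hf'def
  have hf'sm : StronglyMeasurable f' := hf.1.stronglyMeasurable_mk
  have hf'meas : Measurable f' := hf'sm.measurable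
  have hff' : f =ᵐ[ha] f' := hf.1.ae_eq_mk
  have hf2' : MemLp f' 2 ha := hf.ae_eq hff'
  set g : AddCircle T → ℂ := fun x => ∫ y, f (x - y) ∂μ with hgdef
  set g' : AddCircle T → ℂ := fun x => ∫ y, f' (x - y) ∂μ with hg'def
  have hmp : MeasurePreserving (fun p : AddCircle T × AddCircle T => (p.1 - p.2, p.2))
      (ha.prod μ) (ha.prod μ) := measurePreserving_sub_prod _ _
  have hsub : Measure.QuasiMeasurePreserving
      (fun p : AddCircle T × AddCircle T => p.1 - p.2) (ha.prod μ) ha :=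
    Measure.quasiMeasurePreserving_fst.comp hmp.quasiMeasurePreserving
  have hprodae : (fun p : AddCircle T × AddCircle T => f (p.1 - p.2))
      =ᵐ[ha.prod μ] (fun p => f' (p.1 - p.2)) := hsub.ae_eq hff'
  have hgg' : g =ᵐ[ha] g' := by
    filter_upwards [Measure.ae_ae_of_ae_prod hprodae] with x hx
    exact integral_congr_ae hx
  have hF'sm : StronglyMeasurable (fun p : AddCircle T × AddCircle T => f' (p.1 - p.2)) :=
    hf'sm.comp_measurable (measurable_fst.sub measurable_snd)
  have hg'sm : StronglyMeasurable g' := hF'sm.integral_prod_right'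
  -- Part 1 : square-integrability
  have hIf' : ∫⁻ x, (‖f' x‖₊ : ℝ≥0∞) ^ (2:ℝ) ∂ha < ∞ := by
    have h1 := hf2'.2
    rw [eLpNorm_eq_lintegral_rpow_enorm_toReal two_ne_zero ENNReal.ofNat_ne_top] at h1
    simpa [ENNReal.rpow_lt_top_iff_of_pos, ENNReal.toReal_ofNat, enorm_eq_nnnorm] using
      (ENNReal.rpow_lt_top_iff_of_pos (by norm_num : (0:ℝ) < 1/2)).mp h1
  have hm2 : Measurable fun p : AddCircle T × AddCircle T => (‖f' p.1‖₊ : ℝ≥0∞) ^ (2:ℝ) :=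
    (hf'meas.comp measurable_fst).nnnorm.coe_nnreal_ennreal.pow_const _
  have hm3 : Measurable fun p : AddCircle T × AddCircle T => (‖f' (p.1 - p.2)‖₊ : ℝ≥0∞) ^ (2:ℝ) :=
    (hf'meas.comp (measurable_fst.sub measurable_snd)).nnnorm.coe_nnreal_ennreal.pow_const _
  have hTon : ∫⁻ x, ∫⁻ y, (‖f' (x - y)‖₊ : ℝ≥0∞) ^ (2:ℝ) ∂μ ∂ha
      = (∫⁻ x, (‖f' x‖₊ : ℝ≥0∞) ^ (2:ℝ) ∂ha) * μ Set.univ := by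
    have e1 := hmp.lintegral_comp hm2
    simp only [] at e1
    calc ∫⁻ x, ∫⁻ y, (‖f' (x - y)‖₊ : ℝ≥0∞) ^ (2:ℝ) ∂μ ∂ha
        = ∫⁻ p : AddCircle T × AddCircle T, (‖f' (p.1 - p.2)‖₊ : ℝ≥0∞) ^ (2:ℝ)
            ∂(ha.prod μ) := (lintegral_prod _ hm3.aemeasurable).symm
      _ = ∫⁻ p : AddCircle T × AddCircle T, (‖f' p.1‖₊ : ℝ≥0∞) ^ (2:ℝ)
            ∂(ha.prod μ) := e1
      _ = (∫⁻ x, (‖f' x‖₊ : ℝ≥0∞) ^ (2:ℝ) ∂ha) * μ Set.univ := by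
          rw [lintegral_prod _ hm2.aemeasurable]
          simp [lintegral_const, lintegral_mul_const' _ _ (measure_ne_top μ _)]
  have hg2 : MemLp g 2 ha := by
    refine ⟨hg'sm.aestronglyMeasurable.congr hgg'.symm, ?_⟩
    rw [eLpNorm_congr_ae hgg', eLpNorm_eq_lintegral_rpow_enorm_toReal two_ne_zero ENNReal.ofNat_ne_top]
    have hb1 : ∀ x, (‖g' x‖₊ : ℝ≥0∞) ^ (2:ℝ)
        ≤ (∫⁻ y, (‖f' (x - y)‖₊ : ℝ≥0∞) ^ (2:ℝ) ∂μ) * μ Set.univ := by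
      intro x
      have h1 : (‖g' x‖₊ : ℝ≥0∞) ≤ ∫⁻ y, (‖f' (x - y)‖₊ : ℝ≥0∞) ∂μ :=
        enorm_integral_le_lintegral_enorm _
      calc (‖g' x‖₊ : ℝ≥0∞) ^ (2:ℝ)
          ≤ (∫⁻ y, (‖f' (x - y)‖₊ : ℝ≥0∞) ∂μ) ^ (2:ℝ) :=
            ENNReal.rpow_le_rpow h1 (by norm_num)
        _ ≤ _ := sq_lintegral_le' μ _
            ((hf'meas.comp (measurable_const.sub measurable_id)).nnnorm.coe_nnreal_ennreal.aemeasurable)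
    have hchain : ∫⁻ x, (‖g' x‖₊ : ℝ≥0∞) ^ (2:ℝ) ∂ha
        ≤ ((∫⁻ x, (‖f' x‖₊ : ℝ≥0∞) ^ (2:ℝ) ∂ha) * μ Set.univ) * μ Set.univ := by
      calc ∫⁻ x, (‖g' x‖₊ : ℝ≥0∞) ^ (2:ℝ) ∂ha
          ≤ ∫⁻ x, (∫⁻ y, (‖f' (x - y)‖₊ : ℝ≥0∞) ^ (2:ℝ) ∂μ) * μ Set.univ ∂ha :=
            lintegral_mono hb1
        _ = (∫⁻ x, ∫⁻ y, (‖f' (x - y)‖₊ : ℝ≥0∞) ^ (2:ℝ) ∂μ ∂ha) * μ Set.univ :=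
            lintegral_mul_const' _ _ hμfin
        _ = _ := by rw [hTon]
    have hfin : ∫⁻ x, (‖g' x‖₊ : ℝ≥0∞) ^ (2:ℝ) ∂ha < ∞ :=
      lt_of_le_of_lt hchain
        (ENNReal.mul_lt_top (ENNReal.mul_lt_top hIf' hμfin.lt_top) hμfin.lt_top)
    have : ((2:ℝ≥0∞)).toReal = (2:ℝ) := by simp
    rw [this]
    exact ENNReal.rpow_lt_top_of_nonneg (by norm_num) hfin.ne
  refine ⟨hg2, ?_⟩
  -- Part 2 : Parseval-type identity
  have hInt : Integrable (fun p : AddCircle T × AddCircle T => f' (p.1 - p.2)) (ha.prod μ) := by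
    have h1 : Integrable f' ((μ Set.univ) • ha) :=
      (hf2'.integrable one_le_two).smul_measure hμfin
    have h2 : MeasurePreserving (Prod.fst : AddCircle T × AddCircle T → AddCircle T)
        (ha.prod μ) ((μ Set.univ) • ha) := ⟨measurable_fst, Measure.map_fst_prod⟩
    have h3 : Integrable (fun p : AddCircle T × AddCircle T => f' p.1) (ha.prod μ) :=
      (h2.integrable_comp h1.aestronglyMeasurable).2 h1
    exact (hmp.integrable_comp h3.aestronglyMeasurable).2 h3
  have hIntl : ∀ l : ℤ, Integrable
      (fun p : AddCircle T × AddCircle T => fourier (-l) p.1 * f' (p.1 - p.2)) (ha.prod μ) := by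
    intro l
    refine hInt.bdd_mul (c := 1) ?_ (Filter.Eventually.of_forall fun p => by simp [fourier_apply, Circle.norm_coe])
    exact ((map_continuous (fourier (-l))).comp continuous_fst).aestronglyMeasurable
  have hcoef : ∀ l : ℤ, fourierCoeff g l = (∫ y, fourier (-l) y ∂μ) * fourierCoeff f l := by
    intro l
    have hc' : fourierCoeff f l = fourierCoeff f' l :=
      integral_congr_ae (hff'.mono fun t ht => by dsimp only; rw [ht])
    have step1 : fourierCoeff g l = ∫ t, ∫ y, fourier (-l) t * f' (t - y) ∂μ ∂ha := by
      unfold fourierCoeff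
      refine integral_congr_ae (hgg'.mono fun t ht => ?_)
      dsimp only
      rw [smul_eq_mul, ht, hg'def]
      exact (integral_const_mul _ _).symm
    have step2 : ∫ t, ∫ y, fourier (-l) t * f' (t - y) ∂μ ∂ha
        = ∫ y, ∫ t, fourier (-l) t * f' (t - y) ∂ha ∂μ :=
      integral_integral_swap (hIntl l)
    have step3 : ∀ y : AddCircle T, ∫ t, fourier (-l) t * f' (t - y) ∂ha
        = fourier (-l) y * fourierCoeff f' l := by
      intro y
      have e := integral_add_right_eq_self (μ := ha)
        (fun t => fourier (-l) t * f' (t - y)) y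
      rw [← e]
      simp only [add_sub_cancel_right, fourier_add_arg]
      rw [show (fourierCoeff f' l) = ∫ t, fourier (-l) t * f' t ∂ha from
        integral_congr_ae (Filter.EventuallyEq.of_eq (by ext t; simp [fourierCoeff, smul_eq_mul]))]
      rw [← integral_const_mul]
      congr 1; ext t; ring
    rw [step1, step2]
    simp_rw [step3]
    rw [integral_mul_const, hc']
  -- assemble
  have hGg : (hg2.toLp g) =ᵐ[ha] g := hg2.coeFn_toLp
  have hPar := tsum_sq_fourierCoeff (hg2.toLp g)
  have hL : ∫ t, ‖g t‖ ^ 2 ∂ha = ∫ t, ‖(hg2.toLp g : AddCircle T → ℂ) t‖ ^ 2 ∂ha :=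
    integral_congr_ae (hGg.mono fun t ht => by dsimp only; rw [ht])
  have hcoefLp : ∀ l : ℤ, fourierCoeff (hg2.toLp g : AddCircle T → ℂ) l = fourierCoeff g l :=
    fun l => integral_congr_ae (hGg.mono fun t ht => by dsimp only; rw [ht])
  have hdelta : ∀ l : ℤ, ‖∫ y, fourier (-l) y ∂μ‖ = ‖∫ ω, fourier l ω ∂μ‖ := by
    intro l
    have : ∫ y, fourier (-l) y ∂μ = conj (∫ ω, fourier l ω ∂μ) := by
      rw [← integral_conj]
      exact integral_congr_ae (Filter.EventuallyEq.of_eq (by ext y; rw [fourier_neg]))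
    rw [this, RCLike.norm_conj]
  calc ∫ t, ‖g t‖ ^ 2 ∂ha
      = ∑' l : ℤ, ‖fourierCoeff (hg2.toLp g : AddCircle T → ℂ) l‖ ^ 2 := by
        rw [hL, ← hPar]
    _ = ∑' l : ℤ, ‖∫ ω, fourier l ω ∂μ‖ ^ 2 * ‖fourierCoeff f l‖ ^ 2 := by
        refine tsum_congr fun l => ?_
        rw [hcoefLp l, hcoef l, norm_mul, mul_pow, hdelta l]
end

section
/- Define, for odd n and h ∈ ℝ, U_n(h) = (1/n) Σ_{|l| ≤ (n−1)/2} w_l cos(l h) ξ_l η_l. Then sup_{h ∈ [−2π, 2π]} |U_n(h)| → 0 in probability as n → ∞ through odd integers. -/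
open Filter MeasureTheory ProbabilityTheory Real
open scoped ENNReal NNReal

lemma amgm4 (p v : ℝ) : 4*(p^3*v) ≤ 3*p^4 + v^4 := by
  nlinarith [sq_nonneg (p - v), sq_nonneg (p + v), sq_nonneg (p*p - p*v), sq_nonneg (p*p - v*v), sq_nonneg (p*p + p*v), sq_nonneg p, sq_nonneg v, sq_nonneg (p*v)]


lemma pow_le_exp_bound (x : ℝ) (k : ℕ) (hk : k ≤ 4) :
    |x|^k * Real.exp (-x^2/2) ≤ 65 * Real.exp (-(1/4) * x^2) := by
  have h1 : |x|^k ≤ x^4 + 1 := by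
    rcases le_or_gt (|x|) 1 with h | h
    · have := pow_le_one₀ (abs_nonneg x) h (n := k)
      nlinarith [sq_nonneg (x^2), sq_abs x]
    · calc |x|^k ≤ |x|^4 := pow_le_pow_right₀ h.le hk
        _ = x^4 := by rw [← abs_pow, abs_of_nonneg (by positivity)]
        _ ≤ x^4 + 1 := by linarith
  have h2 : x^4 + 1 ≤ 65 * Real.exp ((1/4) * x^2) := by
    set t := (1/4) * x^2 with ht
    have ht0 : 0 ≤ t := by positivity
    have he : Real.exp t = Real.exp (t/2) * Real.exp (t/2) := by
      rw [← Real.exp_add]; ring_nf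
    have hb := Real.add_one_le_exp (t/2)
    have hx4 : x^4 = 16 * t^2 := by rw [ht]; ring
    nlinarith [Real.exp_pos (t/2)]
  have h3 : Real.exp (-x^2/2) ≤ Real.exp (-(1/4)*x^2) * Real.exp (-(1/4)*x^2) := by
    rw [← Real.exp_add]; apply Real.exp_le_exp.2; nlinarith [sq_nonneg x]
  calc |x|^k * Real.exp (-x^2/2) ≤ (x^4+1) * (Real.exp (-(1/4)*x^2) * Real.exp (-(1/4)*x^2)) := by
        apply mul_le_mul h1 h3 (Real.exp_pos _).le (by positivity)
    _ ≤ (65 * Real.exp ((1/4) * x^2)) * (Real.exp (-(1/4)*x^2) * Real.exp (-(1/4)*x^2)) := by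
        apply mul_le_mul_of_nonneg_right h2 (by positivity)
    _ = 65 * (Real.exp ((1/4)*x^2) * Real.exp (-(1/4)*x^2)) * Real.exp (-(1/4)*x^2) := by ring
    _ = 65 * Real.exp (-(1/4)*x^2) := by rw [← Real.exp_add]; norm_num

lemma integrable_pow_gaussian (k : ℕ) (hk : k ≤ 4) :
    Integrable (fun x : ℝ => x^k) (gaussianReal 0 1) := by
  rw [gaussianReal_of_var_ne_zero 0 one_ne_zero,
    integrable_withDensity_iff (measurable_gaussianPDF 0 1)
      (ae_of_all _ fun x => ENNReal.ofReal_lt_top)]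
  have hpdf : ∀ x : ℝ, (gaussianPDF 0 1 x).toReal
      = (Real.sqrt (2 * π))⁻¹ * Real.exp (-x^2/2) := by
    intro x
    rw [gaussianPDF, ENNReal.toReal_ofReal (gaussianPDFReal_nonneg 0 1 x), gaussianPDFReal]
    norm_num
  have hsq : (0:ℝ) < Real.sqrt (2*π) := Real.sqrt_pos.2 (by positivity)
  apply Integrable.mono'
    (g := fun x => (Real.sqrt (2*π))⁻¹ * (65 * Real.exp (-(1/4) * x^2)))
  · exact (((integrable_exp_neg_mul_sq (by norm_num : (0:ℝ) < 1/4)).const_mul 65).const_mul _)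
  · apply Measurable.aestronglyMeasurable
    exact (measurable_id.pow_const k).mul (measurable_gaussianPDF 0 1).ennreal_toReal
  · refine ae_of_all _ fun x => ?_
    rw [hpdf x, Real.norm_eq_abs, abs_mul, abs_mul]
    rw [abs_of_nonneg (Real.exp_pos _).le, abs_of_nonneg (inv_nonneg.2 hsq.le)]
    calc |x^k| * ((Real.sqrt (2*π))⁻¹ * Real.exp (-x^2/2))
        = (Real.sqrt (2*π))⁻¹ * (|x|^k * Real.exp (-x^2/2)) := by rw [abs_pow]; ring
      _ ≤ (Real.sqrt (2*π))⁻¹ * (65 * Real.exp (-(1/4) * x^2)) := by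
          exact mul_le_mul_of_nonneg_left (pow_le_exp_bound x k hk) (by positivity)

lemma gaussian_odd_eq_zero (k : ℕ) (hk : Odd k) :
    ∫ x, x^k ∂(gaussianReal 0 1) = 0 := by
  have hmap : (gaussianReal 0 1).map ((-1 : ℝ) * ·) = gaussianReal 0 1 := by
    rw [gaussianReal_map_const_mul (-1 : ℝ)]
    norm_num
  have h1 : ∫ x, x^k ∂(gaussianReal 0 1)
      = ∫ x, ((-1 : ℝ) * x)^k ∂(gaussianReal 0 1) := by
    conv_lhs => rw [← hmap]
    rw [integral_map (by fun_prop) (by fun_prop)]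
  have h2 : ∀ x : ℝ, ((-1 : ℝ) * x)^k = -(x^k) := by
    intro x; rw [mul_pow, hk.neg_one_pow]; ring
  simp only [h2] at h1
  rw [integral_neg] at h1
  linarith

lemma step_bound {Ω : Type*} [MeasurableSpace Ω] {P : Measure Ω} [IsProbabilityMeasure P]
    (Y S : Ω → ℝ) (cY sS B : ℝ) (hB1 : 1 ≤ B)
    (IntY : ∀ i, i ≤ 4 → Integrable (fun ω => Y ω^i) P)
    (IntS : ∀ k, k ≤ 4 → Integrable (fun ω => S ω^k) P)
    (ind : IndepFun Y S P)
    (hEY1 : ∫ ω, Y ω^1 ∂P = 0) (hEY3 : ∫ ω, Y ω^3 ∂P = 0)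
    (hEY2 : ∫ ω, Y ω^2 ∂P ≤ cY * B^2) (hEY4 : ∫ ω, Y ω^4 ∂P ≤ cY^2 * B^2)
    (hcY : 0 ≤ cY) (hsS : 0 ≤ sS)
    (hES2 : ∫ ω, S ω^2 ∂P ≤ B^2 * sS) (hES4 : ∫ ω, S ω^4 ∂P ≤ 3*B^4 * sS^2) :
    (∀ k, k ≤ 4 → Integrable (fun ω => (Y ω + S ω)^k) P)
    ∧ ∫ ω, (Y ω + S ω)^2 ∂P ≤ B^2 * (cY + sS)
    ∧ ∫ ω, (Y ω + S ω)^4 ∂P ≤ 3*B^4 * (cY + sS)^2 := by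
  have hB0 : (0:ℝ) ≤ B := le_trans zero_le_one hB1
  have indpow : ∀ i j : ℕ, IndepFun (fun ω => Y ω^i) (fun ω => S ω^j) P := fun i j =>
    ind.comp (measurable_id.pow_const i) (measurable_id.pow_const j)
  have IntYS : ∀ i j : ℕ, i ≤ 4 → j ≤ 4 → Integrable (fun ω => Y ω^i * S ω^j) P :=
    fun i j hi hj => (indpow i j).integrable_mul (IntY i hi) (IntS j hj)
  have EYS : ∀ i j : ℕ, i ≤ 4 → j ≤ 4 →
      ∫ ω, Y ω^i * S ω^j ∂P = (∫ ω, Y ω^i ∂P) * (∫ ω, S ω^j ∂P) :=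
    fun i j hi hj => (indpow i j).integral_fun_mul_eq_mul_integral (IntY i hi).1 (IntS j hj).1
  have hES2nn : (0:ℝ) ≤ ∫ ω, S ω^2 ∂P := integral_nonneg fun ω => by positivity
  have hEY2nn : (0:ℝ) ≤ ∫ ω, Y ω^2 ∂P := integral_nonneg fun ω => by positivity
  have hBsq : (0:ℝ) ≤ B^2 - 1 := by nlinarith
  have hB24 : B^2 ≤ B^4 := by nlinarith [mul_nonneg (sq_nonneg B) hBsq]
  refine ⟨?_, ?_, ?_⟩
  · intro k hk
    interval_cases k
    · simp only [pow_zero]; exact integrable_const 1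
    · simp only [pow_one]
      have hY1 : Integrable Y P := by simpa using IntY 1 (by norm_num)
      have hS1 : Integrable S P := by simpa using IntS 1 (by norm_num)
      exact hY1.add hS1
    · rw [show (fun ω => (Y ω + S ω)^2)
        = fun ω => Y ω^2 + (2*(Y ω^1 * S ω^1) + S ω^2) from funext fun ω => by ring]
      exact (IntY 2 (by norm_num)).add
        (((IntYS 1 1 (by norm_num) (by norm_num)).const_mul 2).add (IntS 2 (by norm_num)))
    · rw [show (fun ω => (Y ω + S ω)^3)
        = fun ω => Y ω^3 + (3*(Y ω^2 * S ω^1) + (3*(Y ω^1 * S ω^2) + S ω^3))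
        from funext fun ω => by ring]
      exact (IntY 3 (by norm_num)).add
        (((IntYS 2 1 (by norm_num) (by norm_num)).const_mul 3).add
          (((IntYS 1 2 (by norm_num) (by norm_num)).const_mul 3).add (IntS 3 (by norm_num))))
    · rw [show (fun ω => (Y ω + S ω)^4)
        = fun ω => Y ω^4 + (4*(Y ω^3 * S ω^1) + (6*(Y ω^2 * S ω^2)
            + (4*(Y ω^1 * S ω^3) + S ω^4))) from funext fun ω => by ring]
      exact (IntY 4 (by norm_num)).add
        (((IntYS 3 1 (by norm_num) (by norm_num)).const_mul 4).add
          (((IntYS 2 2 (by norm_num) (by norm_num)).const_mul 6).add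
            (((IntYS 1 3 (by norm_num) (by norm_num)).const_mul 4).add (IntS 4 (by norm_num)))))
  · have e2 : ∀ ω : Ω, (Y ω + S ω)^2 = Y ω^2 + (2*(Y ω^1 * S ω^1) + S ω^2) :=
      fun ω => by ring
    simp only [e2]
    have J1 : Integrable (fun ω => 2*(Y ω^1 * S ω^1)) P :=
      (IntYS 1 1 (by norm_num) (by norm_num)).const_mul 2
    have J2 : Integrable (fun ω => 2*(Y ω^1 * S ω^1) + S ω^2) P := J1.add (IntS 2 (by norm_num))
    rw [integral_add (IntY 2 (by norm_num)) J2,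
      integral_add J1 (IntS 2 (by norm_num)),
      integral_const_mul, EYS 1 1 (by norm_num) (by norm_num), hEY1]
    simp only [zero_mul, mul_zero, zero_add]
    nlinarith [hEY2, hES2]
  · have e4 : ∀ ω : Ω, (Y ω + S ω)^4 = Y ω^4 + (4*(Y ω^3 * S ω^1) + (6*(Y ω^2 * S ω^2)
        + (4*(Y ω^1 * S ω^3) + S ω^4))) := fun ω => by ring
    simp only [e4]
    have K31 : Integrable (fun ω => 4*(Y ω^3 * S ω^1)) P :=
      (IntYS 3 1 (by norm_num) (by norm_num)).const_mul 4
    have K22 : Integrable (fun ω => 6*(Y ω^2 * S ω^2)) P :=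
      (IntYS 2 2 (by norm_num) (by norm_num)).const_mul 6
    have K13 : Integrable (fun ω => 4*(Y ω^1 * S ω^3)) P :=
      (IntYS 1 3 (by norm_num) (by norm_num)).const_mul 4
    have K4 : Integrable (fun ω => 4*(Y ω^1 * S ω^3) + S ω^4) P := K13.add (IntS 4 (by norm_num))
    have K5 : Integrable (fun ω => 6*(Y ω^2 * S ω^2) + (4*(Y ω^1 * S ω^3) + S ω^4)) P := K22.add K4
    have K6 : Integrable (fun ω => 4*(Y ω^3 * S ω^1) + (6*(Y ω^2 * S ω^2)
        + (4*(Y ω^1 * S ω^3) + S ω^4))) P := K31.add K5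
    rw [integral_add (IntY 4 (by norm_num)) K6,
      integral_add K31 K5, integral_add K22 K4, integral_add K13 (IntS 4 (by norm_num)),
      integral_const_mul, integral_const_mul, integral_const_mul,
      EYS 3 1 (by norm_num) (by norm_num), EYS 2 2 (by norm_num) (by norm_num),
      EYS 1 3 (by norm_num) (by norm_num), hEY1, hEY3]
    simp only [zero_mul, mul_zero, zero_add, add_zero]
    have key : (∫ ω, Y ω^2 ∂P) * (∫ ω, S ω^2 ∂P) ≤ (cY * B^2) * (B^2 * sS) :=
      mul_le_mul hEY2 hES2 hES2nn (by positivity)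
    nlinarith [hEY4, hES4, mul_nonneg hcY hsS, sq_nonneg (cY - sS), sq_nonneg (cY + sS),
      mul_nonneg (mul_nonneg hcY hcY) (sq_nonneg B), mul_nonneg hcY hB0]


lemma core_moments {Ω : Type*} [MeasurableSpace Ω] {P : Measure Ω} [IsProbabilityMeasure P]
    {ξ η : ℤ → Ω → ℝ}
    (hξmeas : ∀ l, Measurable (ξ l)) (hηmeas : ∀ l, Measurable (η l))
    (hindep : iIndepFun
      (fun p : ℤ × Bool => if p.2 then ξ p.1 else η p.1) P)
    (hξgauss : ∀ l, Measure.map (ξ l) P = gaussianReal 0 1)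
    (hηgauss : ∀ l, Measure.map (η l) P = gaussianReal 0 1)
    (B : ℝ) (hB1 : 1 ≤ B) (hB2 : ∫ x, x^2 ∂(gaussianReal 0 1) ≤ B)
    (hB4 : ∫ x, x^4 ∂(gaussianReal 0 1) ≤ B)
    (c : ℤ → ℝ) (F : Finset ℤ) :
    (∀ k, k ≤ 4 → Integrable (fun ω => (∑ l ∈ F, c l * (ξ l ω * η l ω))^k) P)
    ∧ ∫ ω, (∑ l ∈ F, c l * (ξ l ω * η l ω))^2 ∂P ≤ B^2 * ∑ l ∈ F, (c l)^2
    ∧ ∫ ω, (∑ l ∈ F, c l * (ξ l ω * η l ω))^4 ∂P ≤ 3*B^4 * (∑ l ∈ F, (c l)^2)^2 := by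
  classical
  have hB0 : (0:ℝ) ≤ B := le_trans zero_le_one hB1
  have hfmeas : ∀ p : ℤ × Bool, Measurable (if p.2 then ξ p.1 else η p.1) := by
    rintro ⟨l, b⟩; cases b
    · simpa using hηmeas l
    · simpa using hξmeas l
  have hg2nonneg : (0:ℝ) ≤ ∫ x, x^2 ∂(gaussianReal 0 1) :=
    integral_nonneg fun x => by positivity
  have hg4nonneg : (0:ℝ) ≤ ∫ x, x^4 ∂(gaussianReal 0 1) :=
    integral_nonneg fun x => by positivity
  -- moments of a single standard gaussian variable
  have moment : ∀ (Z : Ω → ℝ), Measurable Z → Measure.map Z P = gaussianReal 0 1 →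
      ∀ k, k ≤ 4 → (Integrable (fun ω => Z ω^k) P
        ∧ ∫ ω, Z ω^k ∂P = ∫ x, x^k ∂(gaussianReal 0 1)) := by
    intro Z hZ hZg k hk
    have h1 : Integrable (fun x : ℝ => x^k) (Measure.map Z P) := by
      rw [hZg]; exact integrable_pow_gaussian k hk
    have hsm : AEStronglyMeasurable (fun x : ℝ => x^k) (Measure.map Z P) :=
      (measurable_id.pow_const k).aestronglyMeasurable
    constructor
    · exact (integrable_map_measure hsm hZ.aemeasurable).mp h1
    · rw [← hZg, integral_map hZ.aemeasurable hsm]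
  -- independence of ξ a and η a
  have indξη : ∀ a : ℤ, IndepFun (ξ a) (η a) P := by
    intro a
    have hne : ((a, true) : ℤ × Bool) ≠ (a, false) := by simp
    exact hindep.indepFun hne
  -- moments of Y a = c a * (ξ a * η a)
  have IntY : ∀ (a : ℤ) (i : ℕ), i ≤ 4 →
      Integrable (fun ω => (c a * (ξ a ω * η a ω))^i) P := by
    intro a i hi
    have hpm : Measurable (fun x : ℝ => x ^ i) := measurable_id.pow_const i
    have ind := (indξη a).comp hpm hpm
    have h := (ind.integrable_mul (moment (ξ a) (hξmeas a) (hξgauss a) i hi).1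
      (moment (η a) (hηmeas a) (hηgauss a) i hi).1).const_mul ((c a)^i)
    have h2 : Integrable (fun ω => (c a)^i * (ξ a ω ^ i * η a ω ^ i)) P := h
    exact h2.congr (ae_of_all _ fun ω => by ring)
  have EY : ∀ (a : ℤ) (i : ℕ), i ≤ 4 →
      ∫ ω, (c a * (ξ a ω * η a ω))^i ∂P
        = (c a)^i * ((∫ x, x^i ∂(gaussianReal 0 1)) * (∫ x, x^i ∂(gaussianReal 0 1))) := by
    intro a i hi
    have hpm : Measurable (fun x : ℝ => x ^ i) := measurable_id.pow_const i
    have ind := (indξη a).comp hpm hpm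
    have h : ∫ ω, ξ a ω ^ i * η a ω ^ i ∂P
        = (∫ ω, ξ a ω ^ i ∂P) * ∫ ω, η a ω ^ i ∂P :=
      ind.integral_fun_mul_eq_mul_integral (moment (ξ a) (hξmeas a) (hξgauss a) i hi).1.1
        (moment (η a) (hηmeas a) (hηgauss a) i hi).1.1
    have e : (fun ω => (c a * (ξ a ω * η a ω))^i)
        = fun ω => (c a)^i * (ξ a ω ^ i * η a ω ^ i) := by
      funext ω; ring
    rw [e, integral_const_mul, h,
      (moment (ξ a) (hξmeas a) (hξgauss a) i hi).2, (moment (η a) (hηmeas a) (hηgauss a) i hi).2]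
  -- the induction
  induction F using Finset.induction_on with
  | empty =>
      refine ⟨fun k hk => ?_, by simp, by simp⟩
      simpa using integrable_const ((0:ℝ)^k)
  | @insert a F ha ih =>
      obtain ⟨ihInt, ihE2, ihE4⟩ := ih
      have indYS : IndepFun (fun ω => c a * (ξ a ω * η a ω))
          (fun ω => ∑ l ∈ F, c l * (ξ l ω * η l ω)) P := by
        have hdisj : Disjoint ({(a, true), (a, false)} : Finset (ℤ × Bool))
            (F ×ˢ (Finset.univ : Finset Bool)) := by
          simp only [Finset.disjoint_left, Finset.mem_insert, Finset.mem_singleton,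
            Finset.mem_product]
          rintro p (rfl | rfl) ⟨hp, -⟩ <;> exact ha hp
        have base := hindep.indepFun_finset {(a, true), (a, false)} (F ×ˢ Finset.univ)
          hdisj hfmeas
        have hmem1 : ((a, true) : ℤ × Bool) ∈ ({(a, true), (a, false)} : Finset (ℤ × Bool)) := by
          simp
        have hmem2 : ((a, false) : ℤ × Bool) ∈ ({(a, true), (a, false)} : Finset (ℤ × Bool)) := by
          simp
        set φ : (({(a, true), (a, false)} : Finset (ℤ × Bool)) → ℝ) → ℝ :=
          fun v => c a * (v ⟨(a, true), hmem1⟩ * v ⟨(a, false), hmem2⟩) with hφdef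
        set ψ : ((F ×ˢ (Finset.univ : Finset Bool) : Finset (ℤ × Bool)) → ℝ) → ℝ :=
          fun v => ∑ l ∈ F.attach, c l.1 *
            (v ⟨(l.1, true), by simp [l.2]⟩ * v ⟨(l.1, false), by simp [l.2]⟩) with hψdef
        have hφ : Measurable φ := by
          rw [hφdef]; fun_prop
        have hψ : Measurable ψ := by
          rw [hψdef]
          apply Finset.measurable_sum
          intro l _
          fun_prop
        have key := base.comp hφ hψ
        convert key using 1
        · rfl
        funext ω
        rw [hψdef]
        simp only [Function.comp_apply]
        rw [← Finset.sum_attach F (fun l => c l * (ξ l ω * η l ω))]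
        simp

      have hg1 : ∫ x, x^1 ∂(gaussianReal 0 1) = 0 := gaussian_odd_eq_zero 1 ⟨0, by norm_num⟩
      have hg3 : ∫ x, x^3 ∂(gaussianReal 0 1) = 0 := gaussian_odd_eq_zero 3 ⟨1, by norm_num⟩
      have hstep := step_bound (fun ω => c a * (ξ a ω * η a ω))
        (fun ω => ∑ l ∈ F, c l * (ξ l ω * η l ω)) ((c a)^2) (∑ l ∈ F, (c l)^2) B hB1
        (fun i hi => IntY a i hi) (fun k hk => ihInt k hk) indYS
        (by show ∫ ω, (c a * (ξ a ω * η a ω))^1 ∂P = 0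
            rw [EY a 1 (by norm_num), hg1]; ring)
        (by show ∫ ω, (c a * (ξ a ω * η a ω))^3 ∂P = 0
            rw [EY a 3 (by norm_num), hg3]; ring)
        (by show ∫ ω, (c a * (ξ a ω * η a ω))^2 ∂P ≤ (c a)^2 * B^2
            rw [EY a 2 (by norm_num)]
            nlinarith [mul_le_mul hB2 hB2 hg2nonneg hB0, sq_nonneg (c a)])
        (by show ∫ ω, (c a * (ξ a ω * η a ω))^4 ∂P ≤ ((c a)^2)^2 * B^2
            rw [EY a 4 (by norm_num)]
            nlinarith [mul_le_mul hB4 hB4 hg4nonneg hB0, sq_nonneg (c a), sq_nonneg ((c a)^2),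
              pow_nonneg (sq_nonneg (c a)) 2])
        (sq_nonneg _) (Finset.sum_nonneg fun l _ => sq_nonneg _) ihE2 ihE4
      refine ⟨?_, ?_, ?_⟩
      · intro k hk
        exact (hstep.1 k hk).congr (ae_of_all _ fun ω => by simp only [Finset.sum_insert ha])
      · calc ∫ ω, (∑ l ∈ insert a F, c l * (ξ l ω * η l ω))^2 ∂P
            = ∫ ω, (c a * (ξ a ω * η a ω) + ∑ l ∈ F, c l * (ξ l ω * η l ω))^2 ∂P :=
              integral_congr_ae (ae_of_all _ fun ω => by simp only [Finset.sum_insert ha])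
          _ ≤ B^2 * ((c a)^2 + ∑ l ∈ F, (c l)^2) := hstep.2.1
          _ = B^2 * ∑ l ∈ insert a F, (c l)^2 := by rw [Finset.sum_insert ha]
      · calc ∫ ω, (∑ l ∈ insert a F, c l * (ξ l ω * η l ω))^4 ∂P
            = ∫ ω, (c a * (ξ a ω * η a ω) + ∑ l ∈ F, c l * (ξ l ω * η l ω))^4 ∂P :=
              integral_congr_ae (ae_of_all _ fun ω => by simp only [Finset.sum_insert ha])
          _ ≤ 3*B^4 * ((c a)^2 + ∑ l ∈ F, (c l)^2)^2 := hstep.2.2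
          _ = 3*B^4 * (∑ l ∈ insert a F, (c l)^2)^2 := by rw [Finset.sum_insert ha]

lemma card_Icc_real (m : ℕ) : ((Finset.Icc (-(m:ℤ)) m).card : ℝ) = 2*(m:ℝ)+1 := by
  rw [Int.card_Icc]
  have : ((m:ℤ) + 1 - (-(m:ℤ))).toNat = 2*m+1 := by omega
  rw [this]
  push_cast
  ring


section auxdefs
variable {Ω : Type*} [MeasurableSpace Ω]

/-- The random trigonometric polynomial. -/
noncomputable def Tf (ξ η : ℤ → Ω → ℝ) (w : ℤ → ℝ) (m : ℕ) (h : ℝ) (ω : Ω) : ℝ :=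
  (1/(2*(m:ℝ)+1)) * ∑ l ∈ Finset.Icc (-(m:ℤ)) m,
    (w l * Real.cos ((l:ℝ)*h)) * (ξ l ω * η l ω)

/-- Its derivative in `h`. -/
noncomputable def Tf' (ξ η : ℤ → Ω → ℝ) (w : ℤ → ℝ) (m : ℕ) (h : ℝ) (ω : Ω) : ℝ :=
  (1/(2*(m:ℝ)+1)) * ∑ l ∈ Finset.Icc (-(m:ℤ)) m,
    (w l * (-Real.sin ((l:ℝ)*h) * (l:ℝ))) * (ξ l ω * η l ω)

lemma Tf_hasDerivAt (ξ η : ℤ → Ω → ℝ) (w : ℤ → ℝ) (m : ℕ) (h : ℝ) (ω : Ω) :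
    HasDerivAt (fun s => Tf ξ η w m s ω) (Tf' ξ η w m h ω) h := by
  unfold Tf Tf'
  apply HasDerivAt.const_mul
  apply HasDerivAt.fun_sum
  intro l _
  have h1 : HasDerivAt (fun s : ℝ => (l:ℝ)*s) (l:ℝ) h := by
    simpa using (hasDerivAt_id h).const_mul (l:ℝ)
  have h2 : HasDerivAt (fun s : ℝ => Real.cos ((l:ℝ)*s)) (-Real.sin ((l:ℝ)*h) * (l:ℝ)) h :=
    (Real.hasDerivAt_cos ((l:ℝ)*h)).comp h h1
  exact (h2.const_mul (w l)).mul_const _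

lemma Tf'_continuous (ξ η : ℤ → Ω → ℝ) (w : ℤ → ℝ) (m : ℕ) (ω : Ω) :
    Continuous (fun h => Tf' ξ η w m h ω) := by
  unfold Tf'
  refine continuous_const.mul ?_
  apply continuous_finset_sum
  intro l _
  exact (continuous_const.mul (((Real.continuous_sin.comp
    (continuous_const.mul continuous_id)).neg).mul continuous_const)).mul continuous_const

lemma Tf_continuous (ξ η : ℤ → Ω → ℝ) (w : ℤ → ℝ) (m : ℕ) (ω : Ω) :
    Continuous (fun h => Tf ξ η w m h ω) := by
  rw [continuous_iff_continuousAt]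
  exact fun h => (Tf_hasDerivAt ξ η w m h ω).continuousAt

lemma Tf_jm (ξ η : ℤ → Ω → ℝ) (hξ : ∀ l, Measurable (ξ l)) (hη : ∀ l, Measurable (η l))
    (w : ℤ → ℝ) (m : ℕ) :
    Measurable (fun p : Ω × ℝ => Tf ξ η w m p.2 p.1) := by
  unfold Tf
  apply Measurable.const_mul
  apply Finset.measurable_sum
  intro l _
  exact ((Real.measurable_cos.comp (measurable_snd.const_mul (l:ℝ))).const_mul (w l)).mul
    (((hξ l).comp measurable_fst).mul ((hη l).comp measurable_fst))

lemma Tf'_jm (ξ η : ℤ → Ω → ℝ) (hξ : ∀ l, Measurable (ξ l)) (hη : ∀ l, Measurable (η l))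
    (w : ℤ → ℝ) (m : ℕ) :
    Measurable (fun p : Ω × ℝ => Tf' ξ η w m p.2 p.1) := by
  unfold Tf'
  apply Measurable.const_mul
  apply Finset.measurable_sum
  intro l _
  exact ((((Real.measurable_sin.comp (measurable_snd.const_mul (l:ℝ))).neg).mul
    measurable_const).const_mul (w l)).mul
    (((hξ l).comp measurable_fst).mul ((hη l).comp measurable_fst))

section mom
variable {P : Measure Ω} [IsProbabilityMeasure P] {ξ η : ℤ → Ω → ℝ}

lemma Tf_mom (hξmeas : ∀ l, Measurable (ξ l)) (hηmeas : ∀ l, Measurable (η l))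
    (hindep : iIndepFun
      (fun p : ℤ × Bool => if p.2 then ξ p.1 else η p.1) P)
    (hξgauss : ∀ l, Measure.map (ξ l) P = gaussianReal 0 1)
    (hηgauss : ∀ l, Measure.map (η l) P = gaussianReal 0 1)
    (B : ℝ) (hB1 : 1 ≤ B) (hB2 : ∫ x, x^2 ∂(gaussianReal 0 1) ≤ B)
    (hB4 : ∫ x, x^4 ∂(gaussianReal 0 1) ≤ B)
    (C : ℝ) (w : ℤ → ℝ) (hw : ∀ l, 0 ≤ w l ∧ w l ≤ C) (m : ℕ) (h : ℝ) :
    Integrable (fun ω => (Tf ξ η w m h ω)^4) P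
    ∧ ∫ ω, (Tf ξ η w m h ω)^4 ∂P ≤ 3*B^4*C^4 * (1/(2*(m:ℝ)+1)^2) := by
  have hC0 : 0 ≤ C := le_trans (hw 0).1 (hw 0).2
  set n : ℝ := 2*(m:ℝ)+1 with hn
  have hn0 : 0 < n := by rw [hn]; positivity
  set F := Finset.Icc (-(m:ℤ)) m with hF
  set cc : ℤ → ℝ := fun l => w l * Real.cos ((l:ℝ)*h) with hcc
  have core := core_moments hξmeas hηmeas hindep hξgauss hηgauss B hB1 hB2 hB4 cc F
  have hTeq : ∀ ω, Tf ξ η w m h ω = (1/n) * ∑ l ∈ F, cc l * (ξ l ω * η l ω) := by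
    intro ω; rfl
  have hsum : ∑ l ∈ F, (cc l)^2 ≤ C^2 * n := by
    calc ∑ l ∈ F, (cc l)^2 ≤ ∑ l ∈ F, C^2 := by
          apply Finset.sum_le_sum
          intro l _
          have h1 : (w l)^2 ≤ C^2 := pow_le_pow_left₀ (hw l).1 (hw l).2 2
          have h2 : (Real.cos ((l:ℝ)*h))^2 ≤ 1 := Real.cos_sq_le_one _
          have h3 : (0:ℝ) ≤ (w l)^2 := sq_nonneg _
          calc (cc l)^2 = (w l)^2 * (Real.cos ((l:ℝ)*h))^2 := by rw [hcc]; ring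
            _ ≤ C^2 * 1 := mul_le_mul h1 h2 (sq_nonneg _) (by positivity)
            _ = C^2 := by ring
      _ = (F.card : ℝ) * C^2 := by rw [Finset.sum_const, nsmul_eq_mul]
      _ = C^2 * n := by rw [hF, card_Icc_real, hn]; ring
  have hnn : (0:ℝ) ≤ ∑ l ∈ F, (cc l)^2 := Finset.sum_nonneg fun l _ => sq_nonneg _
  constructor
  · have I := (core.1 4 le_rfl).const_mul ((1/n)^4)
    exact I.congr (ae_of_all _ fun ω => by simp only [hTeq]; ring)
  · have e : ∫ ω, (Tf ξ η w m h ω)^4 ∂P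
        = (1/n)^4 * ∫ ω, (∑ l ∈ F, cc l * (ξ l ω * η l ω))^4 ∂P := by
      rw [← integral_const_mul]
      exact integral_congr_ae (ae_of_all _ fun ω => by simp only [hTeq]; ring)
    rw [e]
    have h1 : (∑ l ∈ F, (cc l)^2)^2 ≤ (C^2*n)^2 := pow_le_pow_left₀ hnn hsum 2
    have h2 := core.2.2
    have hB40 : (0:ℝ) ≤ B^4 := by positivity
    calc (1/n)^4 * ∫ ω, (∑ l ∈ F, cc l * (ξ l ω * η l ω))^4 ∂P
        ≤ (1/n)^4 * (3*B^4 * (C^2*n)^2) := by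
          apply mul_le_mul_of_nonneg_left _ (by positivity)
          calc ∫ ω, (∑ l ∈ F, cc l * (ξ l ω * η l ω))^4 ∂P
              ≤ 3*B^4 * (∑ l ∈ F, (cc l)^2)^2 := h2
            _ ≤ 3*B^4 * (C^2*n)^2 := by nlinarith
      _ = 3*B^4*C^4 * (1/n^2) := by field_simp

lemma Tf'_mom (hξmeas : ∀ l, Measurable (ξ l)) (hηmeas : ∀ l, Measurable (η l))
    (hindep : iIndepFun
      (fun p : ℤ × Bool => if p.2 then ξ p.1 else η p.1) P)
    (hξgauss : ∀ l, Measure.map (ξ l) P = gaussianReal 0 1)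
    (hηgauss : ∀ l, Measure.map (η l) P = gaussianReal 0 1)
    (B : ℝ) (hB1 : 1 ≤ B) (hB2 : ∫ x, x^2 ∂(gaussianReal 0 1) ≤ B)
    (hB4 : ∫ x, x^4 ∂(gaussianReal 0 1) ≤ B)
    (C : ℝ) (w : ℤ → ℝ) (hw : ∀ l, 0 ≤ w l ∧ w l ≤ C) (m : ℕ) (h : ℝ) :
    Integrable (fun ω => (Tf' ξ η w m h ω)^4) P
    ∧ ∫ ω, (Tf' ξ η w m h ω)^4 ∂P ≤ 3*B^4*C^4 * (2*(m:ℝ)+1)^2 := by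
  have hC0 : 0 ≤ C := le_trans (hw 0).1 (hw 0).2
  set n : ℝ := 2*(m:ℝ)+1 with hn
  have hn0 : 0 < n := by rw [hn]; positivity
  set F := Finset.Icc (-(m:ℤ)) m with hF
  set cc : ℤ → ℝ := fun l => w l * (-Real.sin ((l:ℝ)*h) * (l:ℝ)) with hcc
  have core := core_moments hξmeas hηmeas hindep hξgauss hηgauss B hB1 hB2 hB4 cc F
  have hTeq : ∀ ω, Tf' ξ η w m h ω = (1/n) * ∑ l ∈ F, cc l * (ξ l ω * η l ω) := by
    intro ω; rfl
  have hsum : ∑ l ∈ F, (cc l)^2 ≤ C^2 * n^3 := by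
    calc ∑ l ∈ F, (cc l)^2 ≤ ∑ l ∈ F, C^2 * n^2 := by
          apply Finset.sum_le_sum
          intro l hl
          have hml := Finset.mem_Icc.1 (hF ▸ hl)
          have hl1 : -(m:ℝ) ≤ (l:ℝ) := by exact_mod_cast hml.1
          have hl2 : (l:ℝ) ≤ (m:ℝ) := by exact_mod_cast hml.2
          have hm0 : (0:ℝ) ≤ (m:ℝ) := Nat.cast_nonneg m
          have hln : ((l:ℝ))^2 ≤ n^2 := by rw [hn]; nlinarith
          have h1 : (w l)^2 ≤ C^2 := pow_le_pow_left₀ (hw l).1 (hw l).2 2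
          have h2 : (Real.sin ((l:ℝ)*h))^2 ≤ 1 := Real.sin_sq_le_one _
          calc (cc l)^2 = (w l)^2 * ((Real.sin ((l:ℝ)*h))^2 * ((l:ℝ))^2) := by rw [hcc]; ring
            _ ≤ C^2 * (1 * n^2) := by
                apply mul_le_mul h1 _ (by positivity) (by positivity)
                apply mul_le_mul h2 hln (sq_nonneg _) zero_le_one
            _ = C^2 * n^2 := by ring
      _ = (F.card : ℝ) * (C^2 * n^2) := by rw [Finset.sum_const, nsmul_eq_mul]
      _ = C^2 * n^3 := by rw [hF, card_Icc_real, ← hn]; ring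
  have hnn : (0:ℝ) ≤ ∑ l ∈ F, (cc l)^2 := Finset.sum_nonneg fun l _ => sq_nonneg _
  constructor
  · have I := (core.1 4 le_rfl).const_mul ((1/n)^4)
    exact I.congr (ae_of_all _ fun ω => by simp only [hTeq]; ring)
  · have e : ∫ ω, (Tf' ξ η w m h ω)^4 ∂P
        = (1/n)^4 * ∫ ω, (∑ l ∈ F, cc l * (ξ l ω * η l ω))^4 ∂P := by
      rw [← integral_const_mul]
      exact integral_congr_ae (ae_of_all _ fun ω => by simp only [hTeq]; ring)
    rw [e]
    have h1 : (∑ l ∈ F, (cc l)^2)^2 ≤ (C^2*n^3)^2 := pow_le_pow_left₀ hnn hsum 2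
    have h2 := core.2.2
    have hB40 : (0:ℝ) ≤ B^4 := by positivity
    calc (1/n)^4 * ∫ ω, (∑ l ∈ F, cc l * (ξ l ω * η l ω))^4 ∂P
        ≤ (1/n)^4 * (3*B^4 * (C^2*n^3)^2) := by
          apply mul_le_mul_of_nonneg_left _ (by positivity)
          calc ∫ ω, (∑ l ∈ F, cc l * (ξ l ω * η l ω))^4 ∂P
              ≤ 3*B^4 * (∑ l ∈ F, (cc l)^2)^2 := h2
            _ ≤ 3*B^4 * (C^2*n^3)^2 := by nlinarith
      _ = 3*B^4*C^4 * n^2 := by field_simp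

end mom
end auxdefs

set_option maxHeartbeats 1000000 in
/-- With `U_n(h) = (1/n) Σ_{|l| ≤ (n−1)/2} w_l cos(l h) ξ_l η_l` for odd
`n = 2m+1`, one has `sup_{h ∈ [−2π,2π]} |U_n(h)| → 0` in probability, where the family
`(ξ_l) ∪ (η_l)` consists of mutually independent standard Gaussians and `0 ≤ w_l ≤ C`. -/
theorem stmt14 {Ω : Type*} [MeasurableSpace Ω] (P : Measure Ω) [IsProbabilityMeasure P]
    (ξ η : ℤ → Ω → ℝ) (hξmeas : ∀ l, Measurable (ξ l)) (hηmeas : ∀ l, Measurable (η l))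
    (hindep : iIndepFun
      (fun p : ℤ × Bool => if p.2 then ξ p.1 else η p.1) P)
    (hξgauss : ∀ l, Measure.map (ξ l) P = gaussianReal 0 1)
    (hηgauss : ∀ l, Measure.map (η l) P = gaussianReal 0 1)
    (C : ℝ) (w : ℤ → ℝ) (hw : ∀ l, 0 ≤ w l ∧ w l ≤ C) :
    ∀ ε > (0 : ℝ),
      Tendsto (fun m : ℕ =>
          P {ω | ε < ⨆ h : Set.Icc (-(2 * Real.pi)) (2 * Real.pi),
            |(1 / (2 * (m : ℝ) + 1)) *
              ∑ l ∈ Finset.Icc (-(m : ℤ)) (m : ℤ),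
                w l * Real.cos ((l : ℝ) * (h : ℝ)) * ξ l ω * η l ω|})
        atTop (nhds 0) := by
  intro ε hε
  have hπ := Real.pi_pos
  have hπ1 := Real.pi_gt_three
  have h2π : -(2*Real.pi) ≤ 2*Real.pi := by nlinarith
  have hC0 : 0 ≤ C := le_trans (hw 0).1 (hw 0).2
  set B : ℝ := max 1 (max (∫ x, x^2 ∂(gaussianReal 0 1)) (∫ x, x^4 ∂(gaussianReal 0 1)))
    with hB
  have hB1 : 1 ≤ B := le_max_left _ _
  have hB2 : ∫ x, x^2 ∂(gaussianReal 0 1) ≤ B := le_trans (le_max_left _ _) (le_max_right _ _)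
  have hB4 : ∫ x, x^4 ∂(gaussianReal 0 1) ≤ B := le_trans (le_max_right _ _) (le_max_right _ _)
  have hB0 : (0:ℝ) ≤ B := le_trans zero_le_one hB1
  set D : ℝ := (45*B^4*C^4) * (4*Real.pi) / ε^4 with hD
  have hD0 : 0 ≤ D := by rw [hD]; positivity
  have key : ∀ m : ℕ,
      P {ω | ε < ⨆ h : Set.Icc (-(2 * Real.pi)) (2 * Real.pi),
            |(1 / (2 * (m : ℝ) + 1)) *
              ∑ l ∈ Finset.Icc (-(m : ℤ)) (m : ℤ),
                w l * Real.cos ((l : ℝ) * (h : ℝ)) * ξ l ω * η l ω|}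
        ≤ ENNReal.ofReal (D * (1/(2*(m:ℝ)+1))) := by
    intro m
    have hn1 : (1:ℝ) ≤ 2*(m:ℝ)+1 := by
      have : (0:ℝ) ≤ (m:ℝ) := Nat.cast_nonneg m
      linarith
    have hn0 : (0:ℝ) < 2*(m:ℝ)+1 := lt_of_lt_of_le zero_lt_one hn1
    set Q : ℝ → Ω → ℝ := fun h ω => (1/(4*Real.pi)) * (Tf ξ η w m h ω)^4
      + (3*(2*(m:ℝ)+1)*(Tf ξ η w m h ω)^4
        + (1/(2*(m:ℝ)+1)^3) * (Tf' ξ η w m h ω)^4) with hQ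
    have hQnn : ∀ h ω, 0 ≤ Q h ω := by
      intro h ω
      rw [hQ]
      positivity
    have hTm := Tf_jm ξ η hξmeas hηmeas w m
    have hT'm := Tf'_jm ξ η hξmeas hηmeas w m
    have hQm : Measurable (fun p : Ω × ℝ => ENNReal.ofReal (Q p.2 p.1)) := by
      apply Measurable.ennreal_ofReal
      simp only [hQ]
      exact ((hTm.pow_const 4).const_mul _).add
        (((hTm.pow_const 4).const_mul _).add ((hT'm.pow_const 4).const_mul _))
    set g : Ω → ℝ≥0∞ :=
      fun ω => ∫⁻ h in Set.Ioc (-(2*Real.pi)) (2*Real.pi), ENNReal.ofReal (Q h ω) with hg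
    have hgm : Measurable g := hQm.lintegral_prod_right'
    have hsub : {ω | ε < ⨆ h : Set.Icc (-(2 * Real.pi)) (2 * Real.pi),
            |(1 / (2 * (m : ℝ) + 1)) *
              ∑ l ∈ Finset.Icc (-(m : ℤ)) (m : ℤ),
                w l * Real.cos ((l : ℝ) * (h : ℝ)) * ξ l ω * η l ω|}
        ⊆ {ω | ENNReal.ofReal (ε^4) ≤ g ω} := by
      intro ω hω
      simp only [Set.mem_setOf_eq] at hω ⊢
      have hbody : ∀ h : Set.Icc (-(2*Real.pi)) (2*Real.pi),
          |(1 / (2 * (m : ℝ) + 1)) * ∑ l ∈ Finset.Icc (-(m : ℤ)) (m : ℤ),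
            w l * Real.cos ((l : ℝ) * (h : ℝ)) * ξ l ω * η l ω|
          = |Tf ξ η w m (h:ℝ) ω| := by
        intro h
        congr 1
        unfold Tf
        congr 1
        apply Finset.sum_congr rfl
        intro l _
        ring
      simp only [hbody] at hω
      haveI : Nonempty (Set.Icc (-(2*Real.pi)) (2*Real.pi)) :=
        Set.Nonempty.to_subtype (Set.nonempty_Icc.2 h2π)
      obtain ⟨h₀, hh₀⟩ : ∃ h : Set.Icc (-(2*Real.pi)) (2*Real.pi),
          ε < |Tf ξ η w m (h:ℝ) ω| := by
        by_contra hc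
        push_neg at hc
        exact absurd hω (not_lt.2 (ciSup_le hc))
      have hder : ∀ s, HasDerivAt (fun u => Tf ξ η w m u ω) (Tf' ξ η w m s ω) s :=
        fun s => Tf_hasDerivAt ξ η w m s ω
      have hTc : Continuous (fun u => Tf ξ η w m u ω) := Tf_continuous ξ η w m ω
      have hT'c : Continuous (fun u => Tf' ξ η w m u ω) := Tf'_continuous ξ η w m ω
      have hgc : Continuous (fun u => 4*(Tf ξ η w m u ω)^3 * (Tf' ξ η w m u ω)) :=
        (continuous_const.mul (hTc.pow 3)).mul hT'c
      have hder4 : ∀ s, HasDerivAt (fun u => (Tf ξ η w m u ω)^4)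
          (4*(Tf ξ η w m s ω)^3 * (Tf' ξ η w m s ω)) s := by
        intro s
        have h := (hder s).pow 4
        norm_num at h
        exact h
      obtain ⟨s₀, hs₀, hminp⟩ := isCompact_Icc.exists_isMinOn (Set.nonempty_Icc.2 h2π)
        ((hTc.pow 4).continuousOn)
      have havg : (Tf ξ η w m s₀ ω)^4 * (4*Real.pi)
          ≤ ∫ u in (-(2*Real.pi))..(2*Real.pi), (Tf ξ η w m u ω)^4 := by
        have hle := intervalIntegral.integral_mono_on (μ := volume) h2π (intervalIntegrable_const)
          ((hTc.pow 4).intervalIntegrable _ _) (fun x hx => hminp hx)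
        rwa [intervalIntegral.integral_const, smul_eq_mul,
          show (2*Real.pi - -(2*Real.pi)) = 4*Real.pi by ring, mul_comm] at hle
      have hftc : (Tf ξ η w m (h₀:ℝ) ω)^4 - (Tf ξ η w m s₀ ω)^4
          = ∫ u in s₀..(h₀:ℝ), 4*(Tf ξ η w m u ω)^3 * (Tf' ξ η w m u ω) :=
        (intervalIntegral.integral_eq_sub_of_hasDerivAt (fun x _ => hder4 x)
          (hgc.intervalIntegrable _ _)).symm
      have h₀I : -(2*Real.pi) ≤ (h₀:ℝ) ∧ (h₀:ℝ) ≤ 2*Real.pi := Set.mem_Icc.1 h₀.2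
      have hs₀I : -(2*Real.pi) ≤ s₀ ∧ s₀ ≤ 2*Real.pi := Set.mem_Icc.1 hs₀
      have habs : |∫ u in s₀..(h₀:ℝ), 4*(Tf ξ η w m u ω)^3 * (Tf' ξ η w m u ω)|
          ≤ ∫ u in (-(2*Real.pi))..(2*Real.pi),
              |4*(Tf ξ η w m u ω)^3 * (Tf' ξ η w m u ω)| := by
        rcases le_total s₀ (h₀:ℝ) with hc | hc
        · calc |∫ u in s₀..(h₀:ℝ), 4*(Tf ξ η w m u ω)^3 * (Tf' ξ η w m u ω)|
              ≤ ∫ u in s₀..(h₀:ℝ), |4*(Tf ξ η w m u ω)^3 * (Tf' ξ η w m u ω)| :=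
                intervalIntegral.abs_integral_le_integral_abs hc
            _ ≤ _ := intervalIntegral.integral_mono_interval hs₀I.1 hc h₀I.2
                (ae_of_all _ fun u => abs_nonneg _) ((hgc.abs).intervalIntegrable _ _)
        · rw [intervalIntegral.integral_symm (h₀:ℝ) s₀, abs_neg]
          calc |∫ u in (h₀:ℝ)..s₀, 4*(Tf ξ η w m u ω)^3 * (Tf' ξ η w m u ω)|
              ≤ ∫ u in (h₀:ℝ)..s₀, |4*(Tf ξ η w m u ω)^3 * (Tf' ξ η w m u ω)| :=
                intervalIntegral.abs_integral_le_integral_abs hc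
            _ ≤ _ := intervalIntegral.integral_mono_interval h₀I.1 hc hs₀I.2
                (ae_of_all _ fun u => abs_nonneg _) ((hgc.abs).intervalIntegrable _ _)
      have hyoung : ∀ u : ℝ, |4*(Tf ξ η w m u ω)^3 * (Tf' ξ η w m u ω)|
          ≤ 3*(2*(m:ℝ)+1)*(Tf ξ η w m u ω)^4
            + (1/(2*(m:ℝ)+1)^3) * (Tf' ξ η w m u ω)^4 := by
        intro u
        set a := Tf ξ η w m u ω with ha
        set b := Tf' ξ η w m u ω with hb
        have hn3 : (0:ℝ) < (2*(m:ℝ)+1)^3 := by positivity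
        rw [← mul_le_mul_iff_of_pos_right hn3]
        have hamgm := amgm4 ((2*(m:ℝ)+1)*|a|) (|b|)
        have e1 : |a|^4 = a^4 := by rw [← abs_pow, abs_of_nonneg (by positivity)]
        have e2 : |b|^4 = b^4 := by rw [← abs_pow, abs_of_nonneg (by positivity)]
        have e3 : |4*a^3*b| = 4*(|a|^3*|b|) := by
          rw [abs_mul, abs_mul, abs_pow, abs_of_nonneg (by norm_num : (0:ℝ) ≤ 4)]
          ring
        calc |4*a^3*b| * (2*(m:ℝ)+1)^3 = 4*(((2*(m:ℝ)+1)*|a|)^3*|b|) := by rw [e3]; ring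
          _ ≤ 3*((2*(m:ℝ)+1)*|a|)^4 + |b|^4 := hamgm
          _ = 3*(2*(m:ℝ)+1)^4*(a^4) + b^4 := by rw [mul_pow, e1, e2]; ring
          _ = (3*(2*(m:ℝ)+1)*a^4 + (1/(2*(m:ℝ)+1)^3) * b^4) * (2*(m:ℝ)+1)^3 := by
              field_simp
      have hIT4 : IntervalIntegrable (fun u => (Tf ξ η w m u ω)^4) volume
          (-(2*Real.pi)) (2*Real.pi) := (hTc.pow 4).intervalIntegrable _ _
      have hIT4c : IntervalIntegrable (fun u => (1/(4*Real.pi)) * (Tf ξ η w m u ω)^4) volume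
          (-(2*Real.pi)) (2*Real.pi) := (continuous_const.mul (hTc.pow 4)).intervalIntegrable _ _
      have hIabs : IntervalIntegrable (fun u => |4*(Tf ξ η w m u ω)^3 * (Tf' ξ η w m u ω)|) volume (-(2*Real.pi)) (2*Real.pi) := (hgc.abs).intervalIntegrable _ _
      have hIyoung : IntervalIntegrable (fun u => 3*(2*(m:ℝ)+1)*(Tf ξ η w m u ω)^4
          + (1/(2*(m:ℝ)+1)^3) * (Tf' ξ η w m u ω)^4) volume (-(2*Real.pi)) (2*Real.pi) :=
        ((continuous_const.mul (hTc.pow 4)).add (continuous_const.mul (hT'c.pow 4))).intervalIntegrable _ _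
      have h3 : ∫ u in (-(2*Real.pi))..(2*Real.pi),
            |4*(Tf ξ η w m u ω)^3 * (Tf' ξ η w m u ω)|
          ≤ ∫ u in (-(2*Real.pi))..(2*Real.pi), (3*(2*(m:ℝ)+1)*(Tf ξ η w m u ω)^4
              + (1/(2*(m:ℝ)+1)^3) * (Tf' ξ η w m u ω)^4) :=
        intervalIntegral.integral_mono_on h2π hIabs hIyoung (fun u _ => hyoung u)
      have h1 : ε^4 < (Tf ξ η w m (h₀:ℝ) ω)^4 := by
        have e1 : |Tf ξ η w m (h₀:ℝ) ω|^4 = (Tf ξ η w m (h₀:ℝ) ω)^4 := by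
          rw [← abs_pow, abs_of_nonneg (by positivity)]
        have := pow_lt_pow_left₀ hh₀ hε.le (n := 4) (by norm_num)
        rwa [e1] at this
      have h4 : (Tf ξ η w m s₀ ω)^4
          ≤ (1/(4*Real.pi)) * ∫ u in (-(2*Real.pi))..(2*Real.pi), (Tf ξ η w m u ω)^4 := by
        have h4π : (0:ℝ) < 4*Real.pi := by positivity
        rw [one_div, inv_mul_eq_div, le_div_iff₀ h4π]
        exact havg
      have h2 : (Tf ξ η w m (h₀:ℝ) ω)^4 ≤ (Tf ξ η w m s₀ ω)^4
          + ∫ u in (-(2*Real.pi))..(2*Real.pi),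
              |4*(Tf ξ η w m u ω)^3 * (Tf' ξ η w m u ω)| := by
        have hle := le_abs_self (∫ u in s₀..(h₀:ℝ),
          4*(Tf ξ η w m u ω)^3 * (Tf' ξ η w m u ω))
        linarith [hftc, habs]
      have h5 : ∫ u in (-(2*Real.pi))..(2*Real.pi), Q u ω
          = ((1/(4*Real.pi)) * ∫ u in (-(2*Real.pi))..(2*Real.pi), (Tf ξ η w m u ω)^4)
            + ∫ u in (-(2*Real.pi))..(2*Real.pi), (3*(2*(m:ℝ)+1)*(Tf ξ η w m u ω)^4
              + (1/(2*(m:ℝ)+1)^3) * (Tf' ξ η w m u ω)^4) := by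
        simp only [hQ]
        rw [intervalIntegral.integral_add hIT4c hIyoung, intervalIntegral.integral_const_mul]
      have hchain : ε^4 < ∫ u in (-(2*Real.pi))..(2*Real.pi), Q u ω := by
        rw [h5]
        linarith [h1, h2, h3, h4]
      have hQci : IntervalIntegrable (fun u => Q u ω) volume (-(2*Real.pi)) (2*Real.pi) := by
        simp only [hQ]
        exact ((continuous_const.mul (hTc.pow 4)).add ((continuous_const.mul (hTc.pow 4)).add
          (continuous_const.mul (hT'c.pow 4)))).intervalIntegrable _ _
      have hQIoc : IntegrableOn (fun u => Q u ω) (Set.Ioc (-(2*Real.pi)) (2*Real.pi)) volume :=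
        (intervalIntegrable_iff_integrableOn_Ioc_of_le h2π).1 hQci
      have hfin : ENNReal.ofReal (ε^4)
          ≤ ENNReal.ofReal (∫ u in (-(2*Real.pi))..(2*Real.pi), Q u ω) :=
        ENNReal.ofReal_le_ofReal hchain.le
      rw [intervalIntegral.integral_of_le h2π,
        ofReal_integral_eq_lintegral_ofReal hQIoc (ae_of_all _ fun u => hQnn u ω)] at hfin
      exact hfin

    have hmarkov := meas_ge_le_lintegral_div (μ := P) hgm.aemeasurable
      (ε := ENNReal.ofReal (ε^4)) (ENNReal.ofReal_pos.2 (by positivity)).ne'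
      ENNReal.ofReal_ne_top
    have hswap : ∫⁻ ω, g ω ∂P
        = ∫⁻ u in Set.Ioc (-(2*Real.pi)) (2*Real.pi), ∫⁻ ω, ENNReal.ofReal (Q u ω) ∂P :=
      lintegral_lintegral_swap hQm.aemeasurable
    have hinner : ∀ u : ℝ, ∫⁻ ω, ENNReal.ofReal (Q u ω) ∂P
        ≤ ENNReal.ofReal ((45*B^4*C^4) * (1/(2*(m:ℝ)+1))) := by
      intro u
      obtain ⟨hTint, hTbd⟩ := Tf_mom hξmeas hηmeas hindep hξgauss hηgauss B hB1 hB2 hB4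
        C w hw m u
      obtain ⟨hT'int, hT'bd⟩ := Tf'_mom hξmeas hηmeas hindep hξgauss hηgauss B hB1 hB2 hB4
        C w hw m u
      have hTnn : (0:ℝ) ≤ ∫ ω, (Tf ξ η w m u ω)^4 ∂P := integral_nonneg fun ω => by positivity
      have hT'nn : (0:ℝ) ≤ ∫ ω, (Tf' ξ η w m u ω)^4 ∂P := integral_nonneg fun ω => by positivity
      have I1 : Integrable (fun ω => (1/(4*Real.pi)) * (Tf ξ η w m u ω)^4) P :=
        hTint.const_mul _
      have I2 : Integrable (fun ω => 3*(2*(m:ℝ)+1)*(Tf ξ η w m u ω)^4) P := hTint.const_mul _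
      have I3 : Integrable (fun ω => (1/(2*(m:ℝ)+1)^3) * (Tf' ξ η w m u ω)^4) P :=
        hT'int.const_mul _
      have I23 : Integrable (fun ω => 3*(2*(m:ℝ)+1)*(Tf ξ η w m u ω)^4
          + (1/(2*(m:ℝ)+1)^3) * (Tf' ξ η w m u ω)^4) P := I2.add I3
      have hQint : Integrable (fun ω => Q u ω) P := by
        simp only [hQ]
        exact I1.add I23
      have hEQ : ∫ ω, Q u ω ∂P ≤ (45*B^4*C^4) * (1/(2*(m:ℝ)+1)) := by
        have e : ∫ ω, Q u ω ∂P
            = (1/(4*Real.pi)) * ∫ ω, (Tf ξ η w m u ω)^4 ∂P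
              + (3*(2*(m:ℝ)+1) * ∫ ω, (Tf ξ η w m u ω)^4 ∂P
                + (1/(2*(m:ℝ)+1)^3) * ∫ ω, (Tf' ξ η w m u ω)^4 ∂P) := by
          simp only [hQ]
          rw [integral_add I1 I23, integral_add I2 I3,
            integral_const_mul, integral_const_mul, integral_const_mul]
        rw [e]
        have hBC : (0:ℝ) ≤ 3*B^4*C^4 := by positivity
        have ha : (1/(4*Real.pi)) * ∫ ω, (Tf ξ η w m u ω)^4 ∂P
            ≤ 3*B^4*C^4 * (1/(2*(m:ℝ)+1)) := by
          have h1 : (1/(4*Real.pi)) ≤ 1 := by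
            rw [div_le_one (by positivity)]
            nlinarith
          have h2 : (1/(2*(m:ℝ)+1)^2) ≤ (1/(2*(m:ℝ)+1)) :=
            one_div_le_one_div_of_le hn0 (by nlinarith)
          have h3 : (1/(4*Real.pi)) * ∫ ω, (Tf ξ η w m u ω)^4 ∂P
              ≤ 1 * ∫ ω, (Tf ξ η w m u ω)^4 ∂P :=
            mul_le_mul_of_nonneg_right h1 hTnn
          have h4 : 3*B^4*C^4 * (1/(2*(m:ℝ)+1)^2) ≤ 3*B^4*C^4 * (1/(2*(m:ℝ)+1)) :=
            mul_le_mul_of_nonneg_left h2 hBC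
          linarith
        have hb : 3*(2*(m:ℝ)+1) * ∫ ω, (Tf ξ η w m u ω)^4 ∂P
            ≤ 9*B^4*C^4 * (1/(2*(m:ℝ)+1)) := by
          have h1 := mul_le_mul_of_nonneg_left hTbd
            (by positivity : (0:ℝ) ≤ 3*(2*(m:ℝ)+1))
          have h2 : 3*(2*(m:ℝ)+1) * (3*B^4*C^4 * (1/(2*(m:ℝ)+1)^2))
              = 9*B^4*C^4 * (1/(2*(m:ℝ)+1)) := by
            field_simp
            ring
          linarith
        have hc : (1/(2*(m:ℝ)+1)^3) * ∫ ω, (Tf' ξ η w m u ω)^4 ∂P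
            ≤ 3*B^4*C^4 * (1/(2*(m:ℝ)+1)) := by
          have h1 := mul_le_mul_of_nonneg_left hT'bd
            (by positivity : (0:ℝ) ≤ (1/(2*(m:ℝ)+1)^3))
          have h2 : (1/(2*(m:ℝ)+1)^3) * (3*B^4*C^4 * (2*(m:ℝ)+1)^2)
              = 3*B^4*C^4 * (1/(2*(m:ℝ)+1)) := by
            field_simp
          linarith
        have hM : (0:ℝ) ≤ B^4*C^4*(1/(2*(m:ℝ)+1)) := by positivity
        linarith
      rw [← ofReal_integral_eq_lintegral_ofReal hQint (ae_of_all _ fun ω => hQnn u ω)]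
      exact ENNReal.ofReal_le_ofReal hEQ
    have htot : ∫⁻ ω, g ω ∂P
        ≤ ENNReal.ofReal ((45*B^4*C^4) * (1/(2*(m:ℝ)+1))) * ENNReal.ofReal (4*Real.pi) := by
      rw [hswap]
      calc ∫⁻ u in Set.Ioc (-(2*Real.pi)) (2*Real.pi), ∫⁻ ω, ENNReal.ofReal (Q u ω) ∂P
          ≤ ∫⁻ _ in Set.Ioc (-(2*Real.pi)) (2*Real.pi),
              ENNReal.ofReal ((45*B^4*C^4) * (1/(2*(m:ℝ)+1))) :=
            lintegral_mono fun u => hinner u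
        _ = ENNReal.ofReal ((45*B^4*C^4) * (1/(2*(m:ℝ)+1)))
            * volume (Set.Ioc (-(2*Real.pi)) (2*Real.pi)) := setLIntegral_const _ _
        _ = ENNReal.ofReal ((45*B^4*C^4) * (1/(2*(m:ℝ)+1))) * ENNReal.ofReal (4*Real.pi) := by
            rw [Real.volume_Ioc]
            congr 1
            ring
    calc P {ω | ε < ⨆ h : Set.Icc (-(2 * Real.pi)) (2 * Real.pi),
            |(1 / (2 * (m : ℝ) + 1)) *
              ∑ l ∈ Finset.Icc (-(m : ℤ)) (m : ℤ),
                w l * Real.cos ((l : ℝ) * (h : ℝ)) * ξ l ω * η l ω|}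
        ≤ P {ω | ENNReal.ofReal (ε^4) ≤ g ω} := measure_mono hsub
      _ ≤ (∫⁻ ω, g ω ∂P) / ENNReal.ofReal (ε^4) := hmarkov
      _ ≤ (ENNReal.ofReal ((45*B^4*C^4) * (1/(2*(m:ℝ)+1))) * ENNReal.ofReal (4*Real.pi))
            / ENNReal.ofReal (ε^4) := ENNReal.div_le_div_right htot _
      _ = ENNReal.ofReal (D * (1/(2*(m:ℝ)+1))) := by
          rw [← ENNReal.ofReal_mul (by positivity),
            ← ENNReal.ofReal_div_of_pos (by positivity)]
          congr 1
          rw [hD]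
          ring

  have hseq : Tendsto (fun m : ℕ => D * (1/(2*(m:ℝ)+1))) atTop (nhds 0) := by
    have h1 : Tendsto (fun m : ℕ => (2*(m:ℝ)+1)) atTop atTop := by
      apply Filter.tendsto_atTop_add_const_right
      exact (tendsto_natCast_atTop_atTop).const_mul_atTop two_pos
    have h2 : Tendsto (fun m : ℕ => (2*(m:ℝ)+1)⁻¹) atTop (nhds 0) := h1.inv_tendsto_atTop
    have h3 := h2.const_mul D
    simpa [one_div, mul_zero] using h3
  have hlim : Tendsto (fun m : ℕ => ENNReal.ofReal (D * (1/(2*(m:ℝ)+1)))) atTop (nhds 0) := by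
    have := ENNReal.tendsto_ofReal hseq
    simpa using this
  exact tendsto_of_tendsto_of_tendsto_of_le_of_le tendsto_const_nhds hlim
    (fun m => zero_le) key
end

section
/- Define, for odd n and h ∈ ℝ, V_n(h) = (1/√n) Σ_{|l| ≤ (n−1)/2} b_l cos(l h + θ_l) ξ_l. Then sup_{h ∈ [−2π, 2π]} |V_n(h)| → 0 in probability as n → ∞ through odd integers. -/
set_option maxHeartbeats 1000000

open Filter MeasureTheory ProbabilityTheory

lemma aux_int_sq : Integrable (fun x : ℝ => x ^ 2) (gaussianReal 0 1) := by
  rw [gaussianReal_of_var_ne_zero 0 one_ne_zero,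
    integrable_withDensity_iff (measurable_gaussianPDF 0 1)
      (ae_of_all _ fun x => ENNReal.ofReal_lt_top)]
  have h := (integrable_rpow_mul_exp_neg_mul_sq (b := (2:ℝ)⁻¹) (by norm_num) (s := 2)
    (by norm_num)).const_mul ((Real.sqrt (2 * Real.pi))⁻¹)
  convert h using 2 with x
  swap
  rw [gaussianPDF_def]
  rw [ENNReal.toReal_ofReal (gaussianPDFReal_nonneg 0 1 x), gaussianPDFReal]
  rw [show ((2:ℝ)) = ((2:ℕ):ℝ) by norm_num, Real.rpow_natCast]
  push_cast
  ring_nf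
  rfl

lemma aux_int_abs : Integrable (fun x : ℝ => |x|) (gaussianReal 0 1) := by
  refine Integrable.mono' ((integrable_const 1).add aux_int_sq) ?_ (ae_of_all _ fun x => ?_)
  · exact (measurable_abs).aestronglyMeasurable
  · simp only [Real.norm_eq_abs, abs_abs, Pi.add_apply]
    nlinarith [sq_nonneg (|x| - 1), sq_abs x, abs_nonneg x]

lemma aux_markov {Ω : Type*} [MeasurableSpace Ω] (P : Measure Ω) [IsProbabilityMeasure P]
    {f : Ω → ℝ} (hf0 : ∀ ω, 0 ≤ f ω) (hfi : Integrable f P) {a : ℝ} (ha : 0 < a) :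
    P {ω | a ≤ f ω} ≤ ENNReal.ofReal ((∫ ω, f ω ∂P) / a) := by
  have h := mul_meas_ge_le_integral_of_nonneg (μ := P) (ae_of_all _ hf0) hfi a
  rw [← ENNReal.ofReal_toReal (measure_ne_top P {ω | a ≤ f ω})]
  exact ENNReal.ofReal_le_ofReal ((le_div_iff₀ ha).mpr (by rw [measureReal_def] at h; linarith [h]))

/-- With `V_n(h) = (1/√n) Σ_{|l| ≤ (n−1)/2} b_l cos(l h + θ_l) ξ_l` for odd
`n = 2m+1`, one has `sup_{h ∈ [−2π,2π]} |V_n(h)| → 0` in probability, where the `ξ_l` are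
i.i.d. standard Gaussians, `b_l ≥ 0` with `Σ b_l² < ∞`, and `θ_l` arbitrary phases. -/
theorem stmt15 {Ω : Type*} [MeasurableSpace Ω] (P : Measure Ω) [IsProbabilityMeasure P]
    (ξ : ℤ → Ω → ℝ) (hξmeas : ∀ l, Measurable (ξ l))
    (hindep : iIndepFun ξ P)
    (hgauss : ∀ l, Measure.map (ξ l) P = gaussianReal 0 1)
    (b : ℤ → ℝ) (hb : ∀ l, 0 ≤ b l) (hb2 : Summable fun l : ℤ => b l ^ 2)
    (θ : ℤ → ℝ) :
    ∀ ε > (0 : ℝ),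
      Tendsto (fun m : ℕ =>
          P {ω | ε < ⨆ h : Set.Icc (-(2 * Real.pi)) (2 * Real.pi),
            |(1 / Real.sqrt (2 * (m : ℝ) + 1)) *
              ∑ l ∈ Finset.Icc (-(m : ℤ)) (m : ℤ),
                b l * Real.cos ((l : ℝ) * (h : ℝ) + θ l) * ξ l ω|})
        atTop (nhds 0) := by
  intro ε hε
  classical
  haveI hne : Nonempty (Set.Icc (-(2 * Real.pi)) (2 * Real.pi)) :=
    Set.Nonempty.to_subtype (Set.nonempty_Icc.mpr (by nlinarith [Real.pi_pos]))
  set c1 : ℝ := ∫ x, |x| ∂(gaussianReal 0 1) with hc1def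
  set c2 : ℝ := ∫ x, x ^ 2 ∂(gaussianReal 0 1) with hc2def
  have hc1_0 : 0 ≤ c1 := integral_nonneg fun x => abs_nonneg x
  have hc2_0 : 0 ≤ c2 := integral_nonneg fun x => sq_nonneg x
  have hI1 : ∀ l, Integrable (fun ω => |ξ l ω|) P := fun l =>
    (integrable_map_measure (f := ξ l) (g := fun x => |x|)
      (by rw [hgauss l]; exact aux_int_abs.aestronglyMeasurable)
      (hξmeas l).aemeasurable).mp (by rw [hgauss l]; exact aux_int_abs)
  have hI2 : ∀ l, Integrable (fun ω => ξ l ω ^ 2) P := fun l =>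
    (integrable_map_measure (f := ξ l) (g := fun x => x ^ 2)
      (by rw [hgauss l]; exact aux_int_sq.aestronglyMeasurable)
      (hξmeas l).aemeasurable).mp (by rw [hgauss l]; exact aux_int_sq)
  have hE1 : ∀ l, ∫ ω, |ξ l ω| ∂P = c1 := fun l => by
    rw [hc1def, ← hgauss l, integral_map (hξmeas l).aemeasurable
      (by rw [hgauss l]; exact aux_int_abs.aestronglyMeasurable)]
  have hE2 : ∀ l, ∫ ω, ξ l ω ^ 2 ∂P = c2 := fun l => by
    rw [hc2def, ← hgauss l, integral_map (hξmeas l).aemeasurable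
      (by rw [hgauss l]; exact aux_int_sq.aestronglyMeasurable)]
  rw [ENNReal.tendsto_nhds_zero]
  intro η hη
  obtain ⟨r, hr0, hrη⟩ : ∃ r : ℝ, 0 < r ∧ ENNReal.ofReal r ≤ η := by
    rcases eq_or_ne η ⊤ with h | h
    · exact ⟨1, one_pos, h ▸ le_top⟩
    · exact ⟨η.toReal, ENNReal.toReal_pos hη.ne' h, by rw [ENNReal.ofReal_toReal h]⟩
  set δ : ℝ := (ε / 2) ^ 2 * (r / 2) / (c2 + 1) with hδdef
  have hδ : 0 < δ := by positivity
  obtain ⟨s₀, hs₀⟩ := hb2.vanishing (Iio_mem_nhds hδ)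
  set L : ℕ := s₀.sup fun l => l.natAbs with hLdef
  have hs₀L : s₀ ⊆ Finset.Icc (-(L : ℤ)) (L : ℤ) := by
    intro l hl
    have h1 : (l.natAbs : ℤ) ≤ (L : ℤ) := Int.ofNat_le.mpr (Finset.le_sup hl)
    rw [Finset.mem_Icc]
    omega
  set C : ℝ := ∑ l ∈ Finset.Icc (-(L : ℤ)) (L : ℤ), b l with hCdef
  have hC0 : 0 ≤ C := Finset.sum_nonneg fun l _ => hb l
  have hev : ∀ᶠ m : ℕ in atTop,
      1 / Real.sqrt (2 * (m : ℝ) + 1) * (C * c1) / (ε / 2) ≤ r / 2 := by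
    have hlin : Tendsto (fun m : ℕ => 2 * (m : ℝ) + 1) atTop atTop :=
      tendsto_atTop_add_const_right _ 1
        ((tendsto_natCast_atTop_atTop).const_mul_atTop two_pos)
    have hsqrt : Tendsto (fun m : ℕ => Real.sqrt (2 * (m : ℝ) + 1)) atTop atTop := by
      have := (tendsto_rpow_atTop (y := (1:ℝ)/2) (by norm_num)).comp hlin
      refine this.congr fun m => ?_
      simp [Function.comp, Real.sqrt_eq_rpow]
    have h0 : Tendsto (fun m : ℕ =>
        1 / Real.sqrt (2 * (m : ℝ) + 1) * (C * c1) / (ε / 2)) atTop (nhds 0) := by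
      have h1 := hsqrt.inv_tendsto_atTop
      have h2 := (h1.mul_const (C * c1)).div_const (ε / 2)
      simpa [one_div] using h2
    exact h0.eventually_le_const (by linarith)
  filter_upwards [hev] with m hm
  set n : ℝ := 2 * (m : ℝ) + 1 with hndef
  have hn : 0 < n := by rw [hndef]; positivity
  have hsqn : 0 < Real.sqrt n := Real.sqrt_pos.mpr hn
  set s : Finset ℤ := Finset.Icc (-(m : ℤ)) (m : ℤ) with hsdef
  set t : Finset ℤ := Finset.Icc (-(L : ℤ)) (L : ℤ) with htdef
  set A : Ω → ℝ := fun ω => 1 / Real.sqrt n * ∑ l ∈ t, b l * |ξ l ω| with hAdef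
  set B : Ω → ℝ := fun ω => 1 / Real.sqrt n * ∑ l ∈ s \ t, b l * |ξ l ω| with hBdef
  set Q : Ω → ℝ := fun ω => ∑ l ∈ s \ t, ξ l ω ^ 2 with hQdef
  have hA0 : ∀ ω, 0 ≤ A ω := fun ω =>
    mul_nonneg (by positivity) (Finset.sum_nonneg fun l _ => mul_nonneg (hb l) (abs_nonneg _))
  have hB0 : ∀ ω, 0 ≤ B ω := fun ω =>
    mul_nonneg (by positivity) (Finset.sum_nonneg fun l _ => mul_nonneg (hb l) (abs_nonneg _))
  have hQ0 : ∀ ω, 0 ≤ Q ω := fun ω => Finset.sum_nonneg fun l _ => sq_nonneg _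
  have hsub : {ω | ε < ⨆ h : Set.Icc (-(2 * Real.pi)) (2 * Real.pi),
        |(1 / Real.sqrt n) * ∑ l ∈ s, b l * Real.cos ((l : ℝ) * (h : ℝ) + θ l) * ξ l ω|}
      ⊆ {ω | ε / 2 ≤ A ω} ∪ {ω | ε / 2 ≤ B ω} := by
    intro ω hω
    simp only [Set.mem_setOf_eq] at hω
    have hbound : (⨆ h : Set.Icc (-(2 * Real.pi)) (2 * Real.pi),
        |(1 / Real.sqrt n) * ∑ l ∈ s, b l * Real.cos ((l : ℝ) * (h : ℝ) + θ l) * ξ l ω|)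
        ≤ A ω + B ω := by
      apply ciSup_le
      intro h
      have hstep1 : |∑ l ∈ s, b l * Real.cos ((l : ℝ) * (h : ℝ) + θ l) * ξ l ω|
          ≤ ∑ l ∈ s, b l * |ξ l ω| := by
        refine (Finset.abs_sum_le_sum_abs _ _).trans (Finset.sum_le_sum fun l _ => ?_)
        rw [abs_mul, abs_mul, abs_of_nonneg (hb l)]
        have h1 := Real.abs_cos_le_one ((l : ℝ) * (h : ℝ) + θ l)
        exact mul_le_mul_of_nonneg_right (by nlinarith [hb l]) (abs_nonneg _)
      have hstep2 : ∑ l ∈ s, b l * |ξ l ω|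
          ≤ (∑ l ∈ t, b l * |ξ l ω|) + ∑ l ∈ s \ t, b l * |ξ l ω| := by
        rw [← Finset.sum_inter_add_sum_sdiff s t fun l => b l * |ξ l ω|]
        gcongr with _ _
        · exact fun l hl _ => mul_nonneg (hb l) (abs_nonneg _)
        · exact Finset.inter_subset_right
      calc |(1 / Real.sqrt n) * ∑ l ∈ s, b l * Real.cos ((l : ℝ) * (h : ℝ) + θ l) * ξ l ω|
          = 1 / Real.sqrt n * |∑ l ∈ s, b l * Real.cos ((l : ℝ) * (h : ℝ) + θ l) * ξ l ω| := by
            rw [abs_mul, abs_of_nonneg (by positivity : (0:ℝ) ≤ 1 / Real.sqrt n)]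
        _ ≤ 1 / Real.sqrt n * ((∑ l ∈ t, b l * |ξ l ω|) + ∑ l ∈ s \ t, b l * |ξ l ω|) := by
            exact mul_le_mul_of_nonneg_left (hstep1.trans hstep2) (by positivity)
        _ = A ω + B ω := by rw [hAdef, hBdef]; ring
    rcases le_or_gt (ε / 2) (A ω) with h | h
    · exact Or.inl h
    · exact Or.inr (by simp only [Set.mem_setOf_eq]; linarith)
  have hAmarkov : P {ω | ε / 2 ≤ A ω} ≤ ENNReal.ofReal (r / 2) := by
    have hAint : Integrable A P :=
      (integrable_finset_sum t fun l _ => (hI1 l).const_mul (b l)).const_mul _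
    have hintA : ∫ ω, A ω ∂P = 1 / Real.sqrt n * (C * c1) := by
      rw [hAdef]
      rw [integral_const_mul, integral_finset_sum _ fun l _ => (hI1 l).const_mul (b l)]
      congr 1
      rw [Finset.sum_congr rfl fun l _ => by rw [integral_const_mul, hE1 l], ← Finset.sum_mul]
    refine (aux_markov P hA0 hAint (by positivity)).trans ?_
    rw [hintA]
    exact ENNReal.ofReal_le_ofReal hm
  have hBmarkov : P {ω | ε / 2 ≤ B ω} ≤ ENNReal.ofReal (r / 2) := by
    have hBsub : {ω | ε / 2 ≤ B ω} ⊆ {ω | n * (ε / 2) ^ 2 / δ ≤ Q ω} := by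
      intro ω hω
      simp only [Set.mem_setOf_eq] at hω ⊢
      set S : ℝ := ∑ l ∈ s \ t, b l * |ξ l ω| with hSdef
      have hCS : S ^ 2 ≤ (∑ l ∈ s \ t, b l ^ 2) * Q ω := by
        have h1 := Finset.sum_mul_sq_le_sq_mul_sq (s \ t) b fun l => |ξ l ω|
        simpa [sq_abs] using h1
      have hbt : (∑ l ∈ s \ t, b l ^ 2) ≤ δ :=
        le_of_lt (hs₀ _ (Finset.sdiff_disjoint.mono_right hs₀L))
      have h1 : (ε / 2) ^ 2 ≤ (1 / Real.sqrt n * S) ^ 2 :=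
        pow_le_pow_left₀ (by linarith) hω 2
      have h2 : (1 / Real.sqrt n * S) ^ 2 = S ^ 2 / n := by
        rw [mul_pow, div_pow, one_pow, Real.sq_sqrt hn.le]
        ring
      have h3 : n * (ε / 2) ^ 2 ≤ δ * Q ω := by
        rw [h2] at h1
        rw [le_div_iff₀ hn] at h1
        nlinarith [hCS, hbt, hQ0 ω]
      rw [div_le_iff₀ hδ]
      linarith
    have hQint : Integrable Q P := integrable_finset_sum _ fun l _ => hI2 l
    have hQval : ∫ ω, Q ω ∂P = ((s \ t).card : ℝ) * c2 := by
      rw [hQdef, integral_finset_sum _ fun l _ => hI2 l,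
        Finset.sum_congr rfl fun l _ => hE2 l, Finset.sum_const, nsmul_eq_mul]
    have hKpos : 0 < n * (ε / 2) ^ 2 / δ := by positivity
    refine (measure_mono hBsub).trans ((aux_markov P hQ0 hQint hKpos).trans ?_)
    rw [hQval]
    apply ENNReal.ofReal_le_ofReal
    have hcard : ((s \ t).card : ℝ) ≤ n := by
      have h1 : (s \ t).card ≤ s.card := Finset.card_le_card Finset.sdiff_subset
      have h2 : s.card = 2 * m + 1 := by
        rw [hsdef, Int.card_Icc]
        omega
      calc ((s \ t).card : ℝ) ≤ (s.card : ℝ) := by exact_mod_cast h1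
        _ = n := by rw [h2, hndef]; push_cast; ring
    rw [div_le_iff₀ hKpos]
    have hrw : r / 2 * (n * (ε / 2) ^ 2 / δ) = n * (c2 + 1) := by
      rw [hδdef]
      field_simp
    rw [hrw]
    nlinarith [hcard, hc2_0, hn]
  refine le_trans (measure_mono hsub) (le_trans (measure_union_le _ _) ?_)
  refine le_trans (add_le_add hAmarkov hBmarkov) ?_
  rw [← ENNReal.ofReal_add (by linarith) (by linarith)]
  refine le_trans (ENNReal.ofReal_le_ofReal (by linarith : r / 2 + r / 2 ≤ r)) hrη
end
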